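/- arXiv:math/0602083 — 9 statements merged into one kernel-verified Lean document; each statement's English description precedes it below -/
import Mathlib

section
/- Let p be a prime and let f : ℤ_p → ℤ_p be a compatible function. Then f preserves the normalized Haar measure μ_p on ℤ_p if and only if f is bijective modulo p^k for every k = 1, 2, 3, … -/
open MeasureTheory Filter

/-- Borel measurable structure on the `p`-adic integers. -/
noncomputable instance padicMS (p : ℕ) [Fact p.Prime] : MeasurableSpace ℤ_[p] := borel _

instance padicBS (p : ℕ) [Fact p.Prime] : BorelSpace ℤ_[p] := ⟨rfl⟩

/-- The Haar measure `μ_p` on `ℤ_p`, normalized so that `μ_p(ℤ_p) = 1`. -/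
noncomputable def padicHaar (p : ℕ) [Fact p.Prime] : Measure ℤ_[p] :=
  Measure.addHaarMeasure (⊤ : TopologicalSpace.PositiveCompacts ℤ_[p])

/-- The map `f̄_k : ℤ/p^kℤ → ℤ/p^kℤ` induced by `f : ℤ_p → ℤ_p` via reduction
modulo `p^k` (well-defined whenever `f` is compatible, i.e. 1-Lipschitz). -/
noncomputable def modMap (p : ℕ) [Fact p.Prime] (f : ℤ_[p] → ℤ_[p]) (k : ℕ) :
    ZMod (p ^ k) → ZMod (p ^ k) :=
  fun z => PadicInt.toZModPow k (f ((z.val : ℕ) : ℤ_[p]))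

/-- The map `F̄_k : (ℤ/p^kℤ)^n → (ℤ/p^kℤ)^m` induced by `F : ℤ_p^n → ℤ_p^m` via
coordinatewise reduction modulo `p^k` (well-defined whenever `F` is compatible). -/
noncomputable def modMapV (p : ℕ) [Fact p.Prime] {n m : ℕ}
    (F : (Fin n → ℤ_[p]) → (Fin m → ℤ_[p])) (k : ℕ) :
    (Fin n → ZMod (p ^ k)) → (Fin m → ZMod (p ^ k)) :=
  fun v i => PadicInt.toZModPow k (F (fun j => ((v j).val : ℤ_[p])) i)

/-- The sphere `S_{p^{-r}}(y) = {z : ‖z - y‖ = p^{-r}}` in `ℤ_p`. -/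
def padicSphere (p : ℕ) [Fact p.Prime] (y : ℤ_[p]) (r : ℕ) : Set ℤ_[p] :=
  {z : ℤ_[p] | ‖z - y‖ = (p : ℝ) ^ (-(r : ℤ))}

/-- The probability measure on the sphere `S_{p^{-r}}(y)`, obtained by restricting the
normalized Haar measure `μ_p` to the sphere and normalizing. -/
noncomputable def sphereMeasure (p : ℕ) [Fact p.Prime] (y : ℤ_[p]) (r : ℕ) : Measure ℤ_[p] :=
  (padicHaar p (padicSphere p y r))⁻¹ • (padicHaar p).restrict (padicSphere p y r)

/-- `f` is ergodic on the sphere `S_{p^{-r}}(y)`: it maps the sphere into itself, preserves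
the normalized restriction of the Haar measure to the sphere, and every invariant
measurable subset of the sphere has normalized measure `0` or `1`. -/
def ErgodicOnSphere (p : ℕ) [Fact p.Prime] (f : ℤ_[p] → ℤ_[p]) (y : ℤ_[p]) (r : ℕ) : Prop :=
  Set.MapsTo f (padicSphere p y r) (padicSphere p y r) ∧
  (∀ A : Set ℤ_[p], MeasurableSet A →
      sphereMeasure p y r (f ⁻¹' A) = sphereMeasure p y r A) ∧
  (∀ A : Set ℤ_[p], MeasurableSet A → A ⊆ padicSphere p y r →
      f ⁻¹' A ∩ padicSphere p y r = A →
      sphereMeasure p y r A = 0 ∨ sphereMeasure p y r A = 1)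

/-- `d ∈ ℤ_p` is primitive modulo `p²`: its image in `ℤ/p²ℤ` generates the whole
group of units `(ℤ/p²ℤ)ˣ`. -/
def PrimitiveModSq (p : ℕ) [Fact p.Prime] (d : ℤ_[p]) : Prop :=
  ∃ u : (ZMod (p ^ 2))ˣ, (u : ZMod (p ^ 2)) = PadicInt.toZModPow 2 d ∧
    ∀ v : (ZMod (p ^ 2))ˣ, v ∈ Subgroup.zpowers u

section Aux
variable (p : ℕ) [Fact p.Prime]

instance : (padicHaar p).IsAddLeftInvariant := by
  unfold padicHaar; infer_instance

lemma padicHaar_univ : padicHaar p Set.univ = 1 := by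
  have := Measure.addHaarMeasure_self
    (K₀ := (⊤ : TopologicalSpace.PositiveCompacts ℤ_[p]))
  rwa [TopologicalSpace.PositiveCompacts.coe_top] at this

instance : IsProbabilityMeasure (padicHaar p) := ⟨padicHaar_univ p⟩

lemma toZModPow_eq_iff (k : ℕ) (x y : ℤ_[p]) :
    PadicInt.toZModPow k x = PadicInt.toZModPow k y ↔ ‖x - y‖ ≤ (p : ℝ) ^ (-(k : ℤ)) := by
  rw [PadicInt.norm_le_pow_iff_mem_span_pow, ← PadicInt.ker_toZModPow, RingHom.mem_ker,
    map_sub, sub_eq_zero]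

/-- The ball of radius `p^{-k}` of residue `a`. -/
def pball (k : ℕ) (a : ZMod (p ^ k)) : Set ℤ_[p] := {x | PadicInt.toZModPow k x = a}

lemma isOpen_pball (k : ℕ) (a : ZMod (p ^ k)) : IsOpen (pball p k a) := by
  rw [Metric.isOpen_iff]
  intro x hx
  have hp : (0:ℝ) < (p : ℝ) ^ (-(k : ℤ)) := by
    have : (0:ℝ) < p := by exact_mod_cast (Fact.out : p.Prime).pos
    positivity
  refine ⟨_, hp, fun y hy => ?_⟩
  have : PadicInt.toZModPow k y = PadicInt.toZModPow k x :=
    (toZModPow_eq_iff p k y x).2 (le_of_lt (by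
      have := Metric.mem_ball.mp hy; rwa [dist_eq_norm] at this))
  simpa [pball, this] using hx

lemma measurableSet_pball (k : ℕ) (a : ZMod (p ^ k)) : MeasurableSet (pball p k a) :=
  (isOpen_pball p k a).measurableSet

lemma pball_disjoint (k : ℕ) {a b : ZMod (p ^ k)} (h : a ≠ b) :
    Disjoint (pball p k a) (pball p k b) := by
  rw [Set.disjoint_left]
  rintro x (hx : _ = a) (hx' : _ = b)
  exact h (hx ▸ hx')

lemma mem_pball_self (k : ℕ) (x : ℤ_[p]) : x ∈ pball p k (PadicInt.toZModPow k x) := rfl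

lemma padicHaar_pball (k : ℕ) (a : ZMod (p ^ k)) :
    padicHaar p (pball p k a) = ((p : ENNReal) ^ k)⁻¹ := by
  haveI : NeZero (p ^ k) := ⟨pow_ne_zero k (Fact.out : p.Prime).ne_zero⟩
  have key : ∀ b : ZMod (p ^ k), padicHaar p (pball p k b) = padicHaar p (pball p k 0) := by
    intro b
    have h1 : (((b.val : ℕ) : ℤ_[p]) + ·) ⁻¹' (pball p k b) = pball p k 0 := by
      ext x
      simp only [pball, Set.mem_preimage, Set.mem_setOf_eq, map_add, map_natCast,
        ZMod.natCast_zmod_val, add_eq_left]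
    calc padicHaar p (pball p k b)
        = padicHaar p ((((b.val : ℕ) : ℤ_[p]) + ·) ⁻¹' (pball p k b)) :=
          (measure_preimage_add _ _ _).symm
      _ = padicHaar p (pball p k 0) := by rw [h1]
  have hsum : ∑ b : ZMod (p ^ k), padicHaar p (pball p k b) = 1 := by
    rw [← tsum_fintype (L := SummationFilter.unconditional _), ← measure_iUnion (fun i j hij => pball_disjoint p k hij)
      (fun b => measurableSet_pball p k b)]
    · have : (⋃ b : ZMod (p ^ k), pball p k b) = Set.univ := by
        ext x; simp only [Set.mem_iUnion, Set.mem_univ, iff_true]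
        exact ⟨_, mem_pball_self p k x⟩
      rw [this, padicHaar_univ]
  have hcard : (Fintype.card (ZMod (p ^ k)) : ENNReal) * padicHaar p (pball p k 0) = 1 := by
    rw [← hsum]
    simp [key, Finset.sum_const, nsmul_eq_mul]
  rw [ZMod.card, Nat.cast_pow] at hcard
  rw [key a]
  exact ENNReal.eq_inv_of_mul_eq_one_left (by rw [mul_comm]; exact hcard)

variable {f : ℤ_[p] → ℤ_[p]}

/-- Key commuting lemma: reduction mod `p^k` intertwines `f` and `modMap`. -/
lemma toZModPow_f (hf : ∀ x y : ℤ_[p], ‖f x - f y‖ ≤ ‖x - y‖) (k : ℕ) (x : ℤ_[p]) :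
    PadicInt.toZModPow k (f x) = modMap p f k (PadicInt.toZModPow k x) := by
  haveI : NeZero (p ^ k) := ⟨pow_ne_zero k (Fact.out : p.Prime).ne_zero⟩
  set a := PadicInt.toZModPow k x with ha
  have hc : PadicInt.toZModPow k ((a.val : ℕ) : ℤ_[p]) = a := by
    rw [map_natCast, ZMod.natCast_zmod_val]
  have h1 : ‖x - ((a.val : ℕ) : ℤ_[p])‖ ≤ (p : ℝ) ^ (-(k : ℤ)) :=
    (toZModPow_eq_iff p k _ _).1 (by rw [hc])
  have h2 : ‖f x - f ((a.val : ℕ) : ℤ_[p])‖ ≤ (p : ℝ) ^ (-(k : ℤ)) :=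
    le_trans (hf _ _) h1
  exact (toZModPow_eq_iff p k _ _).2 h2

/-- Decomposition of the preimage of a ball into balls. -/
lemma preimage_pball (hf : ∀ x y : ℤ_[p], ‖f x - f y‖ ≤ ‖x - y‖) (k : ℕ) (a : ZMod (p ^ k)) :
    f ⁻¹' (pball p k a) =
      ⋃ b ∈ Finset.univ.filter (fun b => modMap p f k b = a), pball p k b := by
  ext x
  simp only [Set.mem_preimage, Set.mem_iUnion, Finset.mem_filter, Finset.mem_univ, true_and,
    pball, Set.mem_setOf_eq, exists_prop]
  constructor
  · intro hx
    exact ⟨PadicInt.toZModPow k x, by rw [← toZModPow_f p hf k x]; exact hx, rfl⟩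
  · rintro ⟨b, hb, rfl⟩
    rw [toZModPow_f p hf k x]; exact hb

lemma padicHaar_preimage_pball (hf : ∀ x y : ℤ_[p], ‖f x - f y‖ ≤ ‖x - y‖) (k : ℕ) (a : ZMod (p ^ k)) :
    padicHaar p (f ⁻¹' (pball p k a)) =
      ((Finset.univ.filter (fun b => modMap p f k b = a)).card : ENNReal) *
        ((p : ENNReal) ^ k)⁻¹ := by
  rw [preimage_pball p hf k a,
    measure_biUnion_finset ?hd (fun b _ => measurableSet_pball p k b)]
  · simp [padicHaar_pball, Finset.sum_const, nsmul_eq_mul]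
  case hd =>
    intro i _ j _ hij
    exact pball_disjoint p k hij

lemma pball_subset {k l : ℕ} (hkl : k ≤ l) {b : ZMod (p ^ l)} {x : ℤ_[p]}
    (hx : x ∈ pball p l b) : pball p l b ⊆ pball p k (PadicInt.toZModPow k x) := by
  intro y hy
  have h1 : PadicInt.toZModPow l y = PadicInt.toZModPow l x := by
    rw [(hy : _ = b), (hx : _ = b)]
  show PadicInt.toZModPow k y = _
  rw [← PadicInt.cast_toZModPow k l hkl y, h1, PadicInt.cast_toZModPow k l hkl x]

/-- The collection of all balls `pball p k a`. -/
def pballs : Set (Set ℤ_[p]) := {s | ∃ (k : ℕ) (a : ZMod (p ^ k)), s = pball p k a}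

lemma isPiSystem_pballs : IsPiSystem (pballs p) := by
  rintro s ⟨k, a, rfl⟩ t ⟨l, b, rfl⟩ ⟨x, hxs, hxt⟩
  rcases le_total k l with h | h
  · have hsub : pball p l b ⊆ pball p k a := by
      have := pball_subset p h hxt
      rwa [(hxs : _ = a)] at this
    rw [Set.inter_eq_self_of_subset_right hsub]
    exact ⟨l, b, rfl⟩
  · have hsub : pball p k a ⊆ pball p l b := by
      have := pball_subset p h hxs
      rwa [(hxt : _ = b)] at this
    rw [Set.inter_eq_self_of_subset_left hsub]
    exact ⟨k, a, rfl⟩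

lemma countable_pballs : (pballs p).Countable := by
  have h : pballs p = ⋃ k : ℕ, Set.range (fun a : ZMod (p ^ k) => pball p k a) := by
    ext s
    simp only [pballs, Set.mem_setOf_eq, Set.mem_iUnion, Set.mem_range, eq_comm]
  rw [h]
  refine Set.countable_iUnion fun k => ?_
  haveI : NeZero (p ^ k) := ⟨pow_ne_zero k (Fact.out : p.Prime).ne_zero⟩
  exact (Set.finite_range _).countable

lemma generateFrom_pballs :
    (padicMS p) = MeasurableSpace.generateFrom (pballs p) := by
  apply le_antisymm
  · have hb : (padicMS p) = MeasurableSpace.generateFrom {s : Set ℤ_[p] | IsOpen s} := rfl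
    rw [hb]
    apply MeasurableSpace.generateFrom_le
    intro U hU
    rw [Set.mem_setOf_eq] at hU
    have hU' : U = ⋃₀ {s | s ∈ pballs p ∧ s ⊆ U} := by
      apply Set.Subset.antisymm
      · intro x hx
        rcases Metric.isOpen_iff.1 (hU : IsOpen U) x hx with ⟨ε, hε, hb⟩
        have hp1 : 1 < (p : ℝ) := by exact_mod_cast (Fact.out : p.Prime).one_lt
        obtain ⟨k, hk⟩ : ∃ k : ℕ, (p : ℝ) ^ (-(k : ℤ)) < ε := by
          obtain ⟨k, hk⟩ := exists_pow_lt_of_lt_one hε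
            (inv_lt_one_of_one_lt₀ hp1)
          exact ⟨k, by rwa [zpow_neg, zpow_natCast, ← inv_pow]⟩
        refine ⟨pball p k (PadicInt.toZModPow k x), ⟨⟨k, _, rfl⟩, fun y hy => ?_⟩,
          mem_pball_self p k x⟩
        apply hb
        have hle : ‖y - x‖ ≤ (p : ℝ) ^ (-(k : ℤ)) :=
          (toZModPow_eq_iff p k y x).1 (show PadicInt.toZModPow k y = PadicInt.toZModPow k x from hy)
        exact Metric.mem_ball.2 (by rw [dist_eq_norm]; exact lt_of_le_of_lt hle hk)
      · rintro x ⟨s, ⟨_, hsU⟩, hxs⟩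
        exact hsU hxs
    rw [hU']
    apply MeasurableSet.sUnion
    · exact (countable_pballs p).mono fun s hs => hs.1
    · rintro s ⟨hs, _⟩
      exact MeasurableSpace.measurableSet_generateFrom hs
  · apply MeasurableSpace.generateFrom_le
    rintro s ⟨k, a, rfl⟩
    exact measurableSet_pball p k a

lemma fiber_card_eq_one {k : ℕ} (hb : Function.Bijective (modMap p f k)) (a : ZMod (p ^ k)) :
    (Finset.univ.filter (fun b => modMap p f k b = a)).card = 1 := by
  obtain ⟨b, hb1, hb2⟩ := (Function.bijective_iff_existsUnique _).1 hb a
  rw [Finset.card_eq_one]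
  refine ⟨b, Finset.eq_singleton_iff_unique_mem.2 ⟨?_, ?_⟩⟩
  · simp [hb1]
  · intro c hc
    exact hb2 c (by simpa using hc)

lemma bijective_modMap_zero : Function.Bijective (modMap p f 0) := by
  haveI : NeZero (p ^ 0) := ⟨pow_ne_zero 0 (Fact.out : p.Prime).ne_zero⟩
  haveI : Subsingleton (ZMod (p ^ 0)) := by
    apply Fintype.card_le_one_iff_subsingleton.1
    rw [ZMod.card, pow_zero]
  exact ⟨fun a b _ => Subsingleton.elim a b, fun a => ⟨a, Subsingleton.elim _ _⟩⟩

end Aux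

/-- A compatible (1-Lipschitz) function `f : ℤ_p → ℤ_p` preserves the normalized Haar
measure `μ_p` if and only if it is bijective modulo `p^k` for every `k ≥ 1`. -/
theorem measurePreserving_iff_bijective_mod (p : ℕ) [Fact p.Prime]
    (f : ℤ_[p] → ℤ_[p]) (hf : ∀ x y : ℤ_[p], ‖f x - f y‖ ≤ ‖x - y‖) :
    (∀ A : Set ℤ_[p], MeasurableSet A → padicHaar p (f ⁻¹' A) = padicHaar p A) ↔
      ∀ k : ℕ, 1 ≤ k → Function.Bijective (modMap p f k) := by
  have hcinv : ∀ k : ℕ, ((p : ENNReal) ^ k)⁻¹ ≠ 0 ∧ ((p : ENNReal) ^ k)⁻¹ ≠ ⊤ := by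
    intro k
    constructor
    · exact ENNReal.inv_ne_zero.2 (ENNReal.pow_ne_top (ENNReal.natCast_ne_top p))
    · exact ENNReal.inv_ne_top.2 (by
        simp [pow_ne_zero, (Fact.out : p.Prime).ne_zero])
  constructor
  · intro h k _
    rw [Function.bijective_iff_existsUnique]
    intro a
    have h1 := h (pball p k a) (measurableSet_pball p k a)
    rw [padicHaar_preimage_pball p hf k a, padicHaar_pball p k a] at h1
    have h2 : ((Finset.univ.filter (fun b => modMap p f k b = a)).card : ENNReal) = 1 := by
      refine (ENNReal.mul_left_inj (hcinv k).1 (hcinv k).2).1 ?_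
      rw [h1, one_mul]
    have h3 : (Finset.univ.filter (fun b => modMap p f k b = a)).card = 1 := by
      exact_mod_cast h2
    obtain ⟨b, hb⟩ := Finset.card_eq_one.1 h3
    refine ⟨b, ?_, ?_⟩
    · have : b ∈ Finset.univ.filter (fun b => modMap p f k b = a) := by
        rw [hb]; exact Finset.mem_singleton_self b
      simpa using this
    · intro c hc
      have : c ∈ Finset.univ.filter (fun b => modMap p f k b = a) := by
        simp [hc]
      rw [hb] at this
      simpa using this
  · intro hbij A hA
    have hlip : LipschitzWith 1 f := by
      apply LipschitzWith.of_dist_le_mul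
      intro x y
      rw [dist_eq_norm, dist_eq_norm]
      simpa using hf x y
    have hmeas : Measurable f := hlip.continuous.measurable
    haveI : IsProbabilityMeasure ((padicHaar p).map f) :=
      Measure.isProbabilityMeasure_map hmeas.aemeasurable
    have hν : (padicHaar p).map f = padicHaar p := by
      refine ext_of_generate_finite (pballs p) (generateFrom_pballs p)
        (isPiSystem_pballs p) ?_ (by simp [measure_univ])
      rintro s ⟨k, a, rfl⟩
      rw [Measure.map_apply hmeas (measurableSet_pball p k a),
        padicHaar_preimage_pball p hf k a, padicHaar_pball p k a]
      have hbk : Function.Bijective (modMap p f k) := by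
        rcases Nat.eq_zero_or_pos k with hk | hk
        · subst hk; exact bijective_modMap_zero p
        · exact hbij k hk
      rw [fiber_card_eq_one p hbk a]
      simp
    rw [← Measure.map_apply hmeas hA, hν]
end

section
/- Let p be a prime, 1 ≤ m ≤ n, and let F : ℤ_p^n → ℤ_p^m be a compatible function. Then F is measure-preserving (i.e., μ_p^{⊗n}(F^{−1}(A)) = μ_p^{⊗m}(A) for every measurable A ⊆ ℤ_p^m) if and only if F is balanced modulo p^k for every k = 1, 2, 3, … -/
open MeasureTheory Filter

namespace PadicBalancedAux

open ENNReal

variable {p : ℕ} [Fact p.Prime]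

lemma toZModPow_eq_iff (k : ℕ) (x y : ℤ_[p]) :
    PadicInt.toZModPow k x = PadicInt.toZModPow k y ↔ ‖x - y‖ ≤ (p:ℝ) ^ (-(k:ℤ)) := by
  rw [← sub_eq_zero, ← map_sub, ← RingHom.mem_ker, PadicInt.ker_toZModPow,
    ← PadicInt.norm_le_pow_iff_mem_span_pow]

lemma neZero_ppow (k : ℕ) : NeZero (p ^ k) :=
  ⟨pow_ne_zero _ (Fact.out : p.Prime).ne_zero⟩

lemma toZModPow_val_cast (k : ℕ) (c : ZMod (p ^ k)) :
    PadicInt.toZModPow k ((c.val : ℕ) : ℤ_[p]) = c := by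
  haveI := neZero_ppow (p := p) k
  rw [map_natCast, ZMod.natCast_zmod_val]

lemma mem_fiber_iff (k : ℕ) (c : ZMod (p ^ k)) (x : ℤ_[p]) :
    PadicInt.toZModPow k x = c ↔ ‖x - ((c.val : ℕ) : ℤ_[p])‖ ≤ (p:ℝ) ^ (-(k:ℤ)) := by
  rw [← toZModPow_eq_iff, toZModPow_val_cast]

lemma isOpen_fiber (k : ℕ) (c : ZMod (p ^ k)) :
    IsOpen {x : ℤ_[p] | PadicInt.toZModPow k x = c} := by
  rw [Metric.isOpen_iff]
  intro x hx
  refine ⟨(p:ℝ) ^ (-(k:ℤ)), zpow_pos (by exact_mod_cast (Fact.out : p.Prime).pos) _, fun y hy => ?_⟩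
  simp only [Set.mem_setOf_eq] at hx ⊢
  rw [← hx, toZModPow_eq_iff]
  rw [Metric.mem_ball, dist_eq_norm] at hy
  exact hy.le

lemma measurableSet_fiber (k : ℕ) (c : ZMod (p ^ k)) :
    MeasurableSet {x : ℤ_[p] | PadicInt.toZModPow k x = c} :=
  (isOpen_fiber k c).measurableSet

lemma padicHaar_univ : padicHaar p Set.univ = 1 := by
  rw [padicHaar, ← TopologicalSpace.PositiveCompacts.coe_top (α := ℤ_[p]),
    Measure.addHaarMeasure_self]

instance : IsProbabilityMeasure (padicHaar p) := ⟨padicHaar_univ⟩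

lemma padicHaar_fiber (k : ℕ) (c : ZMod (p ^ k)) :
    padicHaar p {x : ℤ_[p] | PadicInt.toZModPow k x = c} = ((p : ℝ≥0∞) ^ k)⁻¹ := by
  haveI := neZero_ppow (p := p) k
  haveI hinv : (padicHaar p).IsAddLeftInvariant := by rw [padicHaar]; infer_instance
  have heq : ∀ c : ZMod (p ^ k), padicHaar p {x : ℤ_[p] | PadicInt.toZModPow k x = c}
      = padicHaar p {x : ℤ_[p] | PadicInt.toZModPow k x = 0} := by
    intro c
    have hset : {x : ℤ_[p] | PadicInt.toZModPow k x = c}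
        = (fun x => x + (((-c).val : ℕ) : ℤ_[p])) ⁻¹' {x : ℤ_[p] | PadicInt.toZModPow k x = 0} := by
      ext x
      simp only [Set.mem_preimage, Set.mem_setOf_eq, map_add, toZModPow_val_cast,
        add_neg_eq_zero]
    rw [hset, measure_preimage_add_right]
  have hsum : ∑ c : ZMod (p ^ k), padicHaar p {x : ℤ_[p] | PadicInt.toZModPow k x = c} = 1 := by
    rw [← tsum_fintype (L := SummationFilter.unconditional _), ← measure_iUnion (fun a b hab => ?_) (fun c => measurableSet_fiber k c)]
    · have : ⋃ c : ZMod (p ^ k), {x : ℤ_[p] | PadicInt.toZModPow k x = c} = Set.univ := by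
        ext x; simp
      rw [this, padicHaar_univ]
    · refine Set.disjoint_left.2 fun x hxa hxb => hab ?_
      rw [← hxa, ← hxb]
  have hcard : ∀ c : ZMod (p ^ k), padicHaar p {x : ℤ_[p] | PadicInt.toZModPow k x = c}
      = (p ^ k : ℝ≥0∞)⁻¹ := by
    intro c
    have h1 : (p ^ k : ℝ≥0∞) * padicHaar p {x : ℤ_[p] | PadicInt.toZModPow k x = 0} = 1 := by
      calc (p ^ k : ℝ≥0∞) * padicHaar p {x : ℤ_[p] | PadicInt.toZModPow k x = 0}
          = ∑ c : ZMod (p ^ k), padicHaar p {x : ℤ_[p] | PadicInt.toZModPow k x = c} := by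
            rw [Finset.sum_congr rfl (fun c _ => heq c), Finset.sum_const, Finset.card_univ, ZMod.card,
              nsmul_eq_mul]
            push_cast
            ring
        _ = 1 := hsum
    have hne : (p ^ k : ℝ≥0∞) ≠ 0 := by
      have : (p:ℝ≥0∞) ≠ 0 := by exact_mod_cast (Fact.out : p.Prime).ne_zero
      exact pow_ne_zero _ this
    have hnt : (p ^ k : ℝ≥0∞) ≠ ⊤ := by
      exact pow_ne_top (by simp)
    rw [heq c, ← one_mul (padicHaar p _), ← ENNReal.inv_mul_cancel hne hnt, mul_assoc, h1,
      mul_one]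
  simpa using hcard c

def boxSet (p : ℕ) [Fact p.Prime] {n : ℕ} (k : ℕ) (w : Fin n → ZMod (p ^ k)) :
    Set (Fin n → ℤ_[p]) :=
  Set.pi Set.univ fun i => {z : ℤ_[p] | PadicInt.toZModPow k z = w i}

lemma mem_boxSet {n : ℕ} (k : ℕ) (w : Fin n → ZMod (p ^ k)) (x : Fin n → ℤ_[p]) :
    x ∈ boxSet p k w ↔ ∀ i, PadicInt.toZModPow k (x i) = w i := by
  simp [boxSet]

lemma measurableSet_boxSet {n : ℕ} (k : ℕ) (w : Fin n → ZMod (p ^ k)) :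
    MeasurableSet (boxSet p k w) :=
  MeasurableSet.univ_pi fun i => measurableSet_fiber k (w i)

lemma pi_measure_boxSet {n : ℕ} (k : ℕ) (w : Fin n → ZMod (p ^ k)) :
    (Measure.pi fun _ : Fin n => padicHaar p) (boxSet p k w)
      = (((p : ℝ≥0∞) ^ k)⁻¹) ^ n := by
  rw [boxSet, Measure.pi_pi]
  simp [padicHaar_fiber]

/-- compatibility: the reduction of `F x` depends only on the reduction of `x`. -/
lemma toZModPow_comp_F {n m : ℕ} (F : (Fin n → ℤ_[p]) → (Fin m → ℤ_[p]))
    (hF : ∀ x y : Fin n → ℤ_[p], ‖F x - F y‖ ≤ ‖x - y‖) (k : ℕ) (x : Fin n → ℤ_[p]) (i : Fin m) :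
    PadicInt.toZModPow k (F x i) = modMapV p F k (fun j => PadicInt.toZModPow k (x j)) i := by
  set x' : Fin n → ℤ_[p] := fun j => (((PadicInt.toZModPow k (x j)).val : ℕ) : ℤ_[p]) with hx'
  have hr : (0:ℝ) ≤ (p:ℝ) ^ (-(k:ℤ)) :=
    le_of_lt (zpow_pos (by exact_mod_cast (Fact.out : p.Prime).pos) _)
  have hxx' : ‖x - x'‖ ≤ (p:ℝ) ^ (-(k:ℤ)) := by
    rw [pi_norm_le_iff_of_nonneg hr]
    intro j
    have : PadicInt.toZModPow k (x j) = PadicInt.toZModPow k (x' j) := by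
      rw [hx']; exact (toZModPow_val_cast k _).symm
    rw [toZModPow_eq_iff] at this
    simpa using this
  have hFF : ‖F x - F x'‖ ≤ (p:ℝ) ^ (-(k:ℤ)) := le_trans (hF x x') hxx'
  have hcoord : ‖F x i - F x' i‖ ≤ (p:ℝ) ^ (-(k:ℤ)) := by
    calc ‖F x i - F x' i‖ = ‖(F x - F x') i‖ := by simp
      _ ≤ ‖F x - F x'‖ := norm_le_pi_norm _ i
      _ ≤ _ := hFF
  have := (toZModPow_eq_iff k (F x i) (F x' i)).2 hcoord
  rw [this, modMapV]

lemma preimage_boxSet {n m : ℕ} (F : (Fin n → ℤ_[p]) → (Fin m → ℤ_[p]))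
    (hF : ∀ x y : Fin n → ℤ_[p], ‖F x - F y‖ ≤ ‖x - y‖) (k : ℕ) (v : Fin m → ZMod (p ^ k)) :
    F ⁻¹' (boxSet p k v)
      = ⋃ w ∈ Finset.univ.filter (fun w : Fin n → ZMod (p ^ k) => modMapV p F k w = v),
          boxSet p k w := by
  ext x
  simp only [Set.mem_preimage, mem_boxSet, Set.mem_iUnion, Finset.mem_filter, Finset.mem_univ,
    true_and, exists_prop]
  constructor
  · intro h
    refine ⟨fun j => PadicInt.toZModPow k (x j), ?_, fun i => rfl⟩
    funext i
    rw [← toZModPow_comp_F F hF k x i]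
    exact h i
  · rintro ⟨w, hw, hx⟩
    intro i
    rw [toZModPow_comp_F F hF k x i]
    have : (fun j => PadicInt.toZModPow k (x j)) = w := funext hx
    rw [this, hw]

lemma measure_preimage_boxSet {n m : ℕ} (F : (Fin n → ℤ_[p]) → (Fin m → ℤ_[p]))
    (hF : ∀ x y : Fin n → ℤ_[p], ‖F x - F y‖ ≤ ‖x - y‖) (k : ℕ) (v : Fin m → ZMod (p ^ k)) :
    (Measure.pi fun _ : Fin n => padicHaar p) (F ⁻¹' (boxSet p k v))
      = (Finset.univ.filter (fun w : Fin n → ZMod (p ^ k) => modMapV p F k w = v)).card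
          * (((p : ℝ≥0∞) ^ k)⁻¹) ^ n := by
  rw [preimage_boxSet F hF k v, measure_biUnion_finset ?_ (fun w _ => measurableSet_boxSet k w)]
  · rw [Finset.sum_congr rfl fun w _ => pi_measure_boxSet k w, Finset.sum_const, nsmul_eq_mul]
  · intro a ha b hb hab
    refine Set.disjoint_left.2 fun x hxa hxb => hab ?_
    rw [mem_boxSet] at hxa hxb
    funext i
    rw [← hxa i, ← hxb i]


lemma zpow_mono_padic {k k' : ℕ} (hkk : k ≤ k') :
    (p:ℝ) ^ (-(k':ℤ)) ≤ (p:ℝ) ^ (-(k:ℤ)) := by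
  have hp1 : (1:ℝ) ≤ p := by exact_mod_cast (Fact.out : p.Prime).one_lt.le
  exact zpow_le_zpow_right₀ hp1 (by omega)

lemma fiber_mono {k k' : ℕ} (hkk : k ≤ k') (y z : ℤ_[p])
    (h : PadicInt.toZModPow k' y = PadicInt.toZModPow k' z) :
    PadicInt.toZModPow k y = PadicInt.toZModPow k z := by
  rw [toZModPow_eq_iff] at h ⊢
  exact h.trans (zpow_mono_padic hkk)

lemma isTopologicalBasis_fibers :
    TopologicalSpace.IsTopologicalBasis
      {s : Set ℤ_[p] | ∃ k, 1 ≤ k ∧ ∃ c : ZMod (p ^ k),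
        s = {x | PadicInt.toZModPow k x = c}} := by
  refine TopologicalSpace.isTopologicalBasis_of_isOpen_of_nhds ?_ ?_
  · rintro u ⟨k, -, c, rfl⟩; exact isOpen_fiber k c
  · intro a u hau hu
    rcases Metric.isOpen_iff.1 hu a hau with ⟨ε, hε, hball⟩
    rcases PadicInt.exists_pow_neg_lt p hε with ⟨k, hk⟩
    refine ⟨{x | PadicInt.toZModPow (max k 1) x = PadicInt.toZModPow (max k 1) a},
      ⟨max k 1, le_max_right _ _, _, rfl⟩, rfl, ?_⟩
    intro y hy
    apply hball
    rw [Metric.mem_ball, dist_eq_norm]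
    calc ‖y - a‖ ≤ (p:ℝ) ^ (-(max k 1 : ℕ):ℤ) := (toZModPow_eq_iff (max k 1) y a).1 hy
      _ ≤ (p:ℝ) ^ (-(k:ℤ)) := zpow_mono_padic (le_max_left _ _)
      _ < ε := hk

lemma borel_padic_eq_fibers :
    (padicMS p : MeasurableSpace ℤ_[p]) = MeasurableSpace.generateFrom
      {s : Set ℤ_[p] | ∃ k, 1 ≤ k ∧ ∃ c : ZMod (p ^ k),
        s = {x | PadicInt.toZModPow k x = c}} := by
  rw [padicMS]
  exact TopologicalSpace.IsTopologicalBasis.borel_eq_generateFrom isTopologicalBasis_fibers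

lemma pi_generateFrom_boxes (m : ℕ) :
    (MeasurableSpace.pi : MeasurableSpace (Fin m → ℤ_[p])) = MeasurableSpace.generateFrom
      {s : Set (Fin m → ℤ_[p]) | ∃ k, 1 ≤ k ∧ ∃ v : Fin m → ZMod (p ^ k), s = boxSet p k v} := by
  apply le_antisymm
  · refine iSup_le fun i => ?_
    rw [borel_padic_eq_fibers, MeasurableSpace.comap_generateFrom]
    refine MeasurableSpace.generateFrom_le ?_
    rintro t ⟨s, ⟨k, hk, c, rfl⟩, rfl⟩
    have hset : (fun x : Fin m → ℤ_[p] => x i) ⁻¹' {x | PadicInt.toZModPow k x = c}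
        = ⋃ v ∈ Finset.univ.filter (fun v : Fin m → ZMod (p ^ k) => v i = c), boxSet p k v := by
      ext x
      simp only [Set.mem_preimage, Set.mem_setOf_eq, Set.mem_iUnion, Finset.mem_filter,
        Finset.mem_univ, true_and, exists_prop, mem_boxSet]
      constructor
      · intro h
        exact ⟨fun j => PadicInt.toZModPow k (x j), h, fun j => rfl⟩
      · rintro ⟨v, hv, hx⟩
        rw [hx i, hv]
    rw [hset]
    refine MeasurableSet.biUnion (Finset.countable_toSet _) fun v hv => ?_
    exact MeasurableSpace.measurableSet_generateFrom ⟨k, hk, v, rfl⟩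
  · refine MeasurableSpace.generateFrom_le ?_
    rintro s ⟨k, hk, v, rfl⟩
    exact measurableSet_boxSet k v

lemma isPiSystem_boxes (m : ℕ) :
    IsPiSystem
      {s : Set (Fin m → ℤ_[p]) | ∃ k, 1 ≤ k ∧ ∃ v : Fin m → ZMod (p ^ k), s = boxSet p k v} := by
  have key : ∀ (k k' : ℕ), k ≤ k' → ∀ (v : Fin m → ZMod (p ^ k)) (v' : Fin m → ZMod (p ^ k')),
      (boxSet p k v ∩ boxSet p k' v').Nonempty → boxSet p k v ∩ boxSet p k' v' = boxSet p k' v' := by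
    intro k k' hkk v v' ⟨x, hxv, hxv'⟩
    apply Set.inter_eq_self_of_subset_right
    intro y hy
    rw [mem_boxSet] at hy hxv hxv' ⊢
    intro i
    have : PadicInt.toZModPow k' (y i) = PadicInt.toZModPow k' (x i) := by
      rw [hy i, hxv' i]
    rw [← hxv i]
    exact fiber_mono hkk _ _ this
  rintro s ⟨k, hk, v, rfl⟩ t ⟨k', hk', v', rfl⟩ hne
  rcases le_total k k' with h | h
  · rw [key k k' h v v' hne]; exact ⟨k', hk', v', rfl⟩
  · rw [Set.inter_comm] at hne ⊢
    rw [key k' k h v' v hne]; exact ⟨k, hk, v, rfl⟩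

lemma enn_one_pow (q : ℝ≥0∞) (h0 : q ≠ 0) (ht : q ≠ ⊤) (a : ℕ) : (q⁻¹) ^ a * q ^ a = 1 := by
  rw [← mul_pow, ENNReal.inv_mul_cancel h0 ht, one_pow]

lemma enn_aux (q : ℝ≥0∞) (h0 : q ≠ 0) (ht : q ≠ ⊤) (m d : ℕ) :
    q ^ d * (q⁻¹) ^ (m + d) = (q⁻¹) ^ m := by
  rw [pow_add, mul_comm ((q⁻¹)^m), ← mul_assoc, mul_comm (q ^ d), enn_one_pow q h0 ht, one_mul]

lemma enn_aux2 (q : ℝ≥0∞) (h0 : q ≠ 0) (ht : q ≠ ⊤) (m d : ℕ) (x : ℝ≥0∞)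
    (h : x * (q⁻¹) ^ (m + d) = (q⁻¹) ^ m) : x = q ^ d := by
  calc x = x * ((q⁻¹) ^ (m + d) * q ^ (m + d)) := by
        rw [enn_one_pow q h0 ht, mul_one]
    _ = (q⁻¹) ^ m * q ^ (m + d) := by rw [← mul_assoc, h]
    _ = q ^ d := by rw [pow_add, ← mul_assoc, enn_one_pow q h0 ht, one_mul]

end PadicBalancedAux

open PadicBalancedAux ENNReal in
/-- A compatible function `F : ℤ_p^n → ℤ_p^m` (with `1 ≤ m ≤ n`) is measure-preserving
if and only if it is balanced modulo `p^k` (all fibers of the induced map on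
`(ℤ/p^kℤ)^n → (ℤ/p^kℤ)^m` have cardinality `p^{k(n-m)}`) for every `k ≥ 1`. -/
theorem measurePreserving_iff_balanced_mod (p n m : ℕ) [Fact p.Prime]
    (hm : 1 ≤ m) (hmn : m ≤ n)
    (F : (Fin n → ℤ_[p]) → (Fin m → ℤ_[p]))
    (hF : ∀ x y : Fin n → ℤ_[p], ‖F x - F y‖ ≤ ‖x - y‖) :
    (∀ A : Set (Fin m → ℤ_[p]), MeasurableSet A →
        (Measure.pi fun _ : Fin n => padicHaar p) (F ⁻¹' A) =
          (Measure.pi fun _ : Fin m => padicHaar p) A) ↔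
      ∀ k : ℕ, 1 ≤ k → ∀ v : Fin m → ZMod (p ^ k),
        Nat.card {w : Fin n → ZMod (p ^ k) // modMapV p F k w = v} = p ^ (k * (n - m)) := by
  classical
  have hq0 : ∀ k : ℕ, ((p:ℝ≥0∞) ^ k) ≠ 0 :=
    fun k => pow_ne_zero _ (by exact_mod_cast (Fact.out : p.Prime).ne_zero)
  have hqt : ∀ k : ℕ, ((p:ℝ≥0∞) ^ k) ≠ ⊤ := fun k => ENNReal.pow_ne_top (by simp)
  have hFcont : Continuous F := by
    have hlip : LipschitzWith 1 F := LipschitzWith.of_dist_le_mul fun x y => by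
      rw [dist_eq_norm, dist_eq_norm, NNReal.coe_one, one_mul]; exact hF x y
    exact hlip.continuous
  have hFmeas : Measurable F := hFcont.measurable
  have hnm : n = m + (n - m) := (Nat.add_sub_cancel' hmn).symm
  constructor
  · intro h k hk v
    have hb := h (boxSet p k v) (measurableSet_boxSet k v)
    rw [measure_preimage_boxSet F hF k v, pi_measure_boxSet k v] at hb
    have hcard := enn_aux2 ((p:ℝ≥0∞) ^ k) (hq0 k) (hqt k) m (n - m) _ (by rw [← hnm]; exact hb)
    have hfin : ((Finset.univ.filter
          (fun w : Fin n → ZMod (p ^ k) => modMapV p F k w = v)).card : ℝ≥0∞)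
        = ((p ^ (k * (n - m)) : ℕ) : ℝ≥0∞) := by
      rw [hcard, ← pow_mul, Nat.cast_pow]
    rw [Nat.card_eq_fintype_card, Fintype.card_subtype]
    exact_mod_cast hfin
  · intro h A hA
    haveI : IsProbabilityMeasure (Measure.pi fun _ : Fin n => padicHaar p) := inferInstance
    haveI : IsProbabilityMeasure ((Measure.pi fun _ : Fin n => padicHaar p).map F) :=
      Measure.isProbabilityMeasure_map hFmeas.aemeasurable
    have key : (Measure.pi fun _ : Fin n => padicHaar p).map F
        = (Measure.pi fun _ : Fin m => padicHaar p) := by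
      refine ext_of_generate_finite _ (pi_generateFrom_boxes m) (isPiSystem_boxes m) ?_ ?_
      · rintro s ⟨k, hk, v, rfl⟩
        rw [Measure.map_apply hFmeas (measurableSet_boxSet k v),
          measure_preimage_boxSet F hF k v, pi_measure_boxSet k v]
        have hc : ((Finset.univ.filter
              (fun w : Fin n → ZMod (p ^ k) => modMapV p F k w = v)).card : ℝ≥0∞)
            = ((p:ℝ≥0∞) ^ k) ^ (n - m) := by
          have hv := h k hk v
          rw [Nat.card_eq_fintype_card, Fintype.card_subtype] at hv
          rw [hv, ← pow_mul, Nat.cast_pow]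
        rw [hc]
        have := enn_aux ((p:ℝ≥0∞) ^ k) (hq0 k) (hqt k) m (n - m)
        rw [← hnm] at this
        exact this
      · simp [measure_univ]
    rw [← key, Measure.map_apply hFmeas hA]
end

section
/- Let p be a prime and let g : ℤ_p → ℤ_p be a compatible function that is bijective modulo p^k for every k = 1, 2, 3, …. Then g preserves the normalized Haar measure μ_p, i.e., μ_p(g^{−1}(A)) = μ_p(A) for every measurable A ⊆ ℤ_p. -/
open MeasureTheory Filter

variable {p : ℕ} [Fact p.Prime]

lemma norm_le_iff_toZMod (k : ℕ) (x c : ℤ_[p]) :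
    ‖x - c‖ ≤ (p : ℝ) ^ (-(k : ℤ)) ↔
      PadicInt.toZModPow k x = PadicInt.toZModPow k c := by
  rw [PadicInt.norm_le_pow_iff_mem_span_pow, ← PadicInt.ker_toZModPow,
    RingHom.mem_ker, map_sub, sub_eq_zero]

lemma mem_cball_iff (k : ℕ) (x c : ℤ_[p]) :
    x ∈ Metric.closedBall c ((p : ℝ) ^ (-(k : ℤ))) ↔
      PadicInt.toZModPow k x = PadicInt.toZModPow k c := by
  rw [Metric.mem_closedBall, dist_eq_norm, norm_le_iff_toZMod]

lemma modMap_toZModPow (g : ℤ_[p] → ℤ_[p]) (hg : ∀ x y : ℤ_[p], ‖g x - g y‖ ≤ ‖x - y‖)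
    (k : ℕ) (x : ℤ_[p]) :
    modMap p g k (PadicInt.toZModPow k x) = PadicInt.toZModPow k (g x) := by
  haveI : NeZero (p ^ k) := ⟨pow_ne_zero k (Fact.out (p := p.Prime)).ne_zero⟩
  unfold modMap
  rw [← norm_le_iff_toZMod]
  refine le_trans (hg _ _) ?_
  rw [norm_le_iff_toZMod, map_natCast, ZMod.natCast_val, ZMod.cast_id]

lemma preimage_cball (g : ℤ_[p] → ℤ_[p]) (hg : ∀ x y : ℤ_[p], ‖g x - g y‖ ≤ ‖x - y‖)
    (hbij : ∀ k : ℕ, 1 ≤ k → Function.Bijective (modMap p g k))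
    (k : ℕ) (hk : 1 ≤ k) (c : ℤ_[p]) :
    ∃ b : ℤ_[p], g ⁻¹' Metric.closedBall c ((p : ℝ) ^ (-(k : ℤ)))
      = Metric.closedBall b ((p : ℝ) ^ (-(k : ℤ))) := by
  haveI : NeZero (p ^ k) := ⟨pow_ne_zero k (Fact.out (p := p.Prime)).ne_zero⟩
  obtain ⟨b', hb'⟩ := (hbij k hk).2 (PadicInt.toZModPow k c)
  refine ⟨((b'.val : ℕ) : ℤ_[p]), ?_⟩
  have hbval : PadicInt.toZModPow k (((b'.val : ℕ) : ℤ_[p])) = b' := by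
    rw [map_natCast, ZMod.natCast_val, ZMod.cast_id]
  ext x
  simp only [Set.mem_preimage, mem_cball_iff]
  rw [← modMap_toZModPow g hg, ← hb', hbval]
  exact ⟨fun h => (hbij k hk).1 h, fun h => by rw [h]⟩

/-- The collection of closed balls of radius `p^{-(k+1)}`. -/
def ballFamily (p : ℕ) [Fact p.Prime] : Set (Set ℤ_[p]) :=
  {s | ∃ (c : ℤ_[p]) (k : ℕ), s = Metric.closedBall c ((p : ℝ) ^ (-((k+1 : ℕ) : ℤ)))}

lemma one_lt_p : (1 : ℝ) < p := by
  exact_mod_cast (Fact.out (p := p.Prime)).one_lt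

lemma isOpen_cball (c : ℤ_[p]) (k : ℕ) :
    IsOpen (Metric.closedBall c ((p : ℝ) ^ (-(k : ℤ)))) := by
  have hp0 : (0:ℝ) < (p:ℝ) := lt_trans zero_lt_one one_lt_p
  exact IsUltrametricDist.isOpen_closedBall c (ne_of_gt (zpow_pos hp0 _))

lemma basis_ballFamily : TopologicalSpace.IsTopologicalBasis (ballFamily p) := by
  apply TopologicalSpace.isTopologicalBasis_of_isOpen_of_nhds
  · rintro s ⟨c, k, rfl⟩; exact isOpen_cball c _
  · intro a u ha hu
    obtain ⟨ε, hε, hball⟩ := Metric.isOpen_iff.1 hu a ha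
    have hp0 : (0:ℝ) < (p:ℝ) := lt_trans zero_lt_one one_lt_p
    obtain ⟨n, hn⟩ := exists_pow_lt_of_lt_one hε (inv_lt_one_of_one_lt₀ (one_lt_p (p := p)))
    refine ⟨Metric.closedBall a ((p : ℝ) ^ (-((n+1 : ℕ) : ℤ))), ⟨a, n, rfl⟩, ?_, ?_⟩
    · rw [Metric.mem_closedBall, dist_self]
      positivity
    · refine subset_trans ?_ hball
      intro x hx
      rw [Metric.mem_closedBall] at hx
      rw [Metric.mem_ball]
      have h1 : (p:ℝ) ^ (-((n+1:ℕ):ℤ)) ≤ (p:ℝ) ^ (-(n:ℤ)) := by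
        apply zpow_le_zpow_right₀ (le_of_lt one_lt_p); omega
      have h2 : (p:ℝ) ^ (-(n:ℤ)) < ε := by
        rw [zpow_neg, zpow_natCast, ← inv_pow]; exact hn
      exact lt_of_le_of_lt hx (lt_of_le_of_lt h1 h2)

lemma pi_ballFamily : IsPiSystem (ballFamily p) := by
  rintro s ⟨c, k, rfl⟩ t ⟨d, l, rfl⟩ hne
  obtain ⟨x, hx1, hx2⟩ := hne
  rw [Metric.mem_closedBall, dist_eq_norm] at hx1 hx2
  have key : ∀ (c d x : ℤ_[p]) (r1 r2 : ℝ), r2 ≤ r1 → ‖x - c‖ ≤ r1 → ‖x - d‖ ≤ r2 →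
      Metric.closedBall c r1 ∩ Metric.closedBall d r2 = Metric.closedBall d r2 := by
    intro c d x r1 r2 hr h1 h2
    refine Set.inter_eq_self_of_subset_right ?_
    intro w hw
    rw [Metric.mem_closedBall, dist_eq_norm] at hw ⊢
    have : w - c = (w - d) + ((d - x) + (x - c)) := by ring
    rw [this]
    refine le_trans (PadicInt.nonarchimedean _ _) (max_le (le_trans hw hr) ?_)
    refine le_trans (PadicInt.nonarchimedean _ _) (max_le ?_ h1)
    rw [← norm_neg, neg_sub]; exact le_trans h2 hr
  rcases le_total ((p:ℝ) ^ (-((l+1:ℕ):ℤ))) ((p:ℝ) ^ (-((k+1:ℕ):ℤ))) with h | h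
  · rw [key c d x _ _ h hx1 hx2]; exact ⟨d, l, rfl⟩
  · rw [Set.inter_comm, key d c x _ _ h hx2 hx1]; exact ⟨c, k, rfl⟩

/-- A compatible (1-Lipschitz) function `g : ℤ_p → ℤ_p` that is bijective modulo `p^k`
for every `k ≥ 1` preserves the normalized Haar measure `μ_p`. -/
theorem measurePreserving_of_compatible_bijective_mod (p : ℕ) [Fact p.Prime]
    (g : ℤ_[p] → ℤ_[p]) (hg : ∀ x y : ℤ_[p], ‖g x - g y‖ ≤ ‖x - y‖)
    (hbij : ∀ k : ℕ, 1 ≤ k → Function.Bijective (modMap p g k)) :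
    ∀ A : Set ℤ_[p], MeasurableSet A → padicHaar p (g ⁻¹' A) = padicHaar p A := by

  have hg_lip : LipschitzWith 1 g := LipschitzWith.of_dist_le_mul (fun x y => by
    simpa [dist_eq_norm] using hg x y)
  have hgm : Measurable g := hg_lip.continuous.measurable
  set μ := padicHaar p with hμ
  haveI hinv : μ.IsAddLeftInvariant := by
    rw [hμ]; unfold padicHaar; infer_instance
  have hgen : (padicMS p) = MeasurableSpace.generateFrom (ballFamily p) :=
    basis_ballFamily.borel_eq_generateFrom
  haveI : IsFiniteMeasure μ := by
    constructor
    rw [hμ, padicHaar]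
    exact measure_lt_top _ _
  have key : μ.map g = μ := by
    refine ext_of_generate_finite (ballFamily p) hgen pi_ballFamily ?_ ?_
    · rintro s ⟨c, k, rfl⟩
      rw [Measure.map_apply hgm measurableSet_closedBall]
      obtain ⟨b, hb⟩ := preimage_cball g hg hbij (k+1) (by omega) c
      rw [hb]
      have htrans : Metric.closedBall c ((p:ℝ) ^ (-((k+1:ℕ):ℤ)))
          = (fun x => (b - c) + x) ⁻¹' Metric.closedBall b ((p:ℝ) ^ (-((k+1:ℕ):ℤ))) := by
        ext x
        simp only [Set.mem_preimage, Metric.mem_closedBall, dist_eq_norm]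
        constructor <;> intro h
        · have : b - c + x - b = x - c := by ring
          rw [this]; exact h
        · have : x - c = b - c + x - b := by ring
          rw [this]; exact h
      conv_rhs => rw [htrans]
      rw [measure_preimage_add]
    · rw [Measure.map_apply hgm MeasurableSet.univ, Set.preimage_univ]
  intro A hA
  conv_rhs => rw [← key]
  rw [Measure.map_apply hgm hA]
end

section
/- Let p be a prime and let f : ℤ_p → ℤ_p be a compatible function that preserves the normalized Haar measure μ_p. Then f is an isometry: ‖f(x) − f(y)‖_p = ‖x − y‖_p for all x, y ∈ ℤ_p. -/
open MeasureTheory Filter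

section Aux
variable (p : ℕ) [Fact p.Prime]

/-- The closed ball of radius `p^(-n)` around `c`. -/
def padicBall (c : ℤ_[p]) (n : ℤ) : Set ℤ_[p] := {z : ℤ_[p] | ‖z - c‖ ≤ (p : ℝ) ^ (-n)}

lemma padicBall_isOpen (c : ℤ_[p]) (n : ℤ) : IsOpen (padicBall p c n) := by
  have : padicBall p c n = Metric.ball c ((p:ℝ) ^ (-n+1)) := by
    ext z
    rw [padicBall, Set.mem_setOf_eq, Metric.mem_ball, dist_eq_norm,
      PadicInt.norm_le_pow_iff_norm_lt_pow_add_one]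
  rw [this]; exact Metric.isOpen_ball

lemma padicBall_isClosed (c : ℤ_[p]) (n : ℤ) : IsClosed (padicBall p c n) := by
  have : padicBall p c n = Metric.closedBall c ((p:ℝ) ^ (-n)) := by
    ext z; rw [padicBall, Set.mem_setOf_eq, Metric.mem_closedBall, dist_eq_norm]
  rw [this]; exact Metric.isClosed_closedBall

lemma padicBall_measurable (c : ℤ_[p]) (n : ℤ) : MeasurableSet (padicBall p c n) :=
  (padicBall_isOpen p c n).measurableSet

instance : (padicHaar p).IsAddHaarMeasure := by
  unfold padicHaar; infer_instance

lemma padicBall_measure_eq (c c' : ℤ_[p]) (n : ℤ) :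
    padicHaar p (padicBall p c n) = padicHaar p (padicBall p c' n) := by
  have h : padicBall p c n = (fun z => (c' - c) + z) ⁻¹' padicBall p c' n := by
    ext z
    simp only [padicBall, Set.mem_preimage, Set.mem_setOf_eq]
    have : c' - c + z - c' = z - c := by ring
    rw [this]
  rw [h, measure_preimage_add]

lemma padicBall_measure_pos (c : ℤ_[p]) (n : ℤ) : 0 < padicHaar p (padicBall p c n) :=
  (padicBall_isOpen p c n).measure_pos _ ⟨c, by simp [padicBall, zpow_nonneg]⟩

lemma padicBall_measure_lt_top (c : ℤ_[p]) (n : ℤ) : padicHaar p (padicBall p c n) < ⊤ :=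
  ((padicBall_isClosed p c n).isCompact).measure_lt_top

end Aux

/-- A compatible (1-Lipschitz) function `f : ℤ_p → ℤ_p` that preserves the normalized
Haar measure `μ_p` is an isometry. -/
theorem isometry_of_compatible_measurePreserving (p : ℕ) [Fact p.Prime]
    (f : ℤ_[p] → ℤ_[p]) (hf : ∀ x y : ℤ_[p], ‖f x - f y‖ ≤ ‖x - y‖)
    (hmp : ∀ A : Set ℤ_[p], MeasurableSet A → padicHaar p (f ⁻¹' A) = padicHaar p A) :
    ∀ x y : ℤ_[p], ‖f x - f y‖ = ‖x - y‖ := by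
  intro x y
  by_cases hxy : x = y
  · simp [hxy]
  refine le_antisymm (hf x y) ?_
  by_contra hlt
  push_neg at hlt
  have hd : x - y ≠ 0 := sub_ne_zero.2 hxy
  set k : ℤ := ((x - y).valuation : ℤ) with hk
  have hnorm : ‖x - y‖ = (p : ℝ) ^ (-k) := PadicInt.norm_eq_zpow_neg_valuation hd
  -- ‖f x - f y‖ ≤ p ^ (-(k+1))
  have hfle : ‖f x - f y‖ ≤ (p : ℝ) ^ (-(k + 1)) := by
    rw [PadicInt.norm_le_pow_iff_norm_lt_pow_add_one]
    have : -(k + 1) + 1 = -k := by ring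
    rw [this, ← hnorm]
    exact hlt
  -- the three balls
  set B := padicBall p (f x) (k + 1) with hB
  have hBx : padicBall p x (k + 1) ⊆ f ⁻¹' B := by
    intro z hz
    exact le_trans (hf z x) hz
  have hBy : padicBall p y (k + 1) ⊆ f ⁻¹' B := by
    intro z hz
    have h1 : f z - f x = (f z - f y) + (f y - f x) := by ring
    have h2 : ‖f y - f x‖ = ‖f x - f y‖ := by rw [← norm_neg]; congr 1; ring
    show ‖f z - f x‖ ≤ (p : ℝ) ^ (-(k + 1))
    rw [h1]
    refine le_trans (PadicInt.nonarchimedean _ _) (max_le ?_ ?_)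
    · exact le_trans (hf z y) hz
    · rw [h2]; exact hfle
  have hdisj : Disjoint (padicBall p x (k + 1)) (padicBall p y (k + 1)) := by
    rw [Set.disjoint_left]
    intro z hzx hzy
    have h1 : x - y = -(z - x) + (z - y) := by ring
    have hle : ‖x - y‖ ≤ (p : ℝ) ^ (-(k + 1)) := by
      rw [h1]
      refine le_trans (PadicInt.nonarchimedean _ _) (max_le ?_ hzy)
      rw [norm_neg]; exact hzx
    have hplt : (p : ℝ) ^ (-(k + 1)) < (p : ℝ) ^ (-k) := by
      apply zpow_lt_zpow_right₀
      · exact_mod_cast (Fact.out : p.Prime).one_lt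
      · omega
    rw [hnorm] at hle
    exact absurd (lt_of_le_of_lt hle hplt) (lt_irrefl _)
  -- measures
  set m := padicHaar p B with hm
  have hmx : padicHaar p (padicBall p x (k + 1)) = m := padicBall_measure_eq p x (f x) (k + 1)
  have hmy : padicHaar p (padicBall p y (k + 1)) = m := padicBall_measure_eq p y (f x) (k + 1)
  have hunion : padicHaar p (padicBall p x (k + 1) ∪ padicBall p y (k + 1)) = m + m := by
    rw [measure_union hdisj (padicBall_measurable p y (k + 1)), hmx, hmy]
  have hle2 : m + m ≤ m := by
    rw [← hunion, hm, ← hmp B (padicBall_measurable p (f x) (k + 1))]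
    exact measure_mono (Set.union_subset hBx hBy)
  have h0 : m ≠ 0 := (padicBall_measure_pos p (f x) (k + 1)).ne'
  have htop : m ≠ ⊤ := (padicBall_measure_lt_top p (f x) (k + 1)).ne
  exact absurd hle2 (not_le.2 (ENNReal.lt_add_right htop h0))
end

section
/- Let p be a prime, 1 ≤ m ≤ n, and let F : ℤ_p^n → ℤ_p^m be a compatible function that is balanced modulo p^k for every k = 1, 2, 3, …. Then for every b ∈ ℤ_p^m and every integer s ≥ 1, the full preimage F^{−1}(b + p^sℤ_p^m) is a union of exactly p^{s(n−m)} pairwise disjoint balls: there exist a_1, …, a_{p^{s(n−m)}} ∈ ℤ_p^n with the sets a_j + p^sℤ_p^n pairwise disjoint and F^{−1}(b + p^sℤ_p^m) = ⋃_{j=1}^{p^{s(n−m)}} (a_j + p^sℤ_p^n). -/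
open MeasureTheory Filter

section AuxForPreimage
variable {p : ℕ} [Fact p.Prime]

lemma norm_sub_le_pow_iff_toZModPow_eq (s : ℕ) (z w : ℤ_[p]) :
    ‖z - w‖ ≤ (p : ℝ) ^ (-(s : ℤ)) ↔
      PadicInt.toZModPow s z = PadicInt.toZModPow s w := by
  rw [PadicInt.norm_le_pow_iff_mem_span_pow, ← PadicInt.ker_toZModPow, RingHom.mem_ker,
    map_sub, sub_eq_zero]

lemma toZModPow_natCast_val (s : ℕ) (a : ZMod (p ^ s)) :
    PadicInt.toZModPow s ((a.val : ℕ) : ℤ_[p]) = a := by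
  haveI : NeZero (p ^ s) := ⟨pow_ne_zero _ (Fact.out (p := p.Prime)).ne_zero⟩
  rw [map_natCast, ZMod.natCast_zmod_val]

lemma mem_closedBall_iff_toZModPow (s : ℕ) {N : ℕ} (c x : Fin N → ℤ_[p]) :
    x ∈ Metric.closedBall c ((p : ℝ) ^ (-(s : ℤ))) ↔
      ∀ i, PadicInt.toZModPow s (x i) = PadicInt.toZModPow s (c i) := by
  have hr : (0 : ℝ) ≤ (p : ℝ) ^ (-(s : ℤ)) :=
    le_of_lt (zpow_pos (by exact_mod_cast (Fact.out (p := p.Prime)).pos) _)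
  rw [Metric.mem_closedBall, dist_eq_norm, pi_norm_le_iff_of_nonneg hr]
  exact forall_congr' fun i => by rw [Pi.sub_apply, norm_sub_le_pow_iff_toZModPow_eq]

end AuxForPreimage

/-- If a compatible `F : ℤ_p^n → ℤ_p^m` (with `1 ≤ m ≤ n`) is balanced modulo `p^k` for
every `k ≥ 1`, then for every `b ∈ ℤ_p^m` and `s ≥ 1` the full preimage of the ball
`b + p^sℤ_p^m` is a union of exactly `p^{s(n-m)}` pairwise disjoint balls of radius
`p^{-s}` in `ℤ_p^n`. -/
theorem preimage_ball_eq_union_balls (p n m : ℕ) [Fact p.Prime]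
    (hm : 1 ≤ m) (hmn : m ≤ n)
    (F : (Fin n → ℤ_[p]) → (Fin m → ℤ_[p]))
    (hF : ∀ x y : Fin n → ℤ_[p], ‖F x - F y‖ ≤ ‖x - y‖)
    (hbal : ∀ k : ℕ, 1 ≤ k → ∀ v : Fin m → ZMod (p ^ k),
      Nat.card {w : Fin n → ZMod (p ^ k) // modMapV p F k w = v} = p ^ (k * (n - m)))
    (b : Fin m → ℤ_[p]) (s : ℕ) (hs : 1 ≤ s) :
    ∃ a : Fin (p ^ (s * (n - m))) → (Fin n → ℤ_[p]),
      (Pairwise fun i j =>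
        Disjoint (Metric.closedBall (a i) ((p : ℝ) ^ (-(s : ℤ))))
          (Metric.closedBall (a j) ((p : ℝ) ^ (-(s : ℤ))))) ∧
      F ⁻¹' Metric.closedBall b ((p : ℝ) ^ (-(s : ℤ))) =
        ⋃ j : Fin (p ^ (s * (n - m))), Metric.closedBall (a j) ((p : ℝ) ^ (-(s : ℤ))) := by
  classical
  haveI : NeZero (p ^ s) := ⟨pow_ne_zero _ (Fact.out (p := p.Prime)).ne_zero⟩
  have hr : (0 : ℝ) ≤ (p : ℝ) ^ (-(s : ℤ)) :=
    le_of_lt (zpow_pos (by exact_mod_cast (Fact.out (p := p.Prime)).pos) _)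
  have hmod : ∀ x : Fin n → ℤ_[p], ∀ i,
      modMapV p F s (fun j => PadicInt.toZModPow s (x j)) i
        = PadicInt.toZModPow s (F x i) := by
    intro x i
    have hxy : ‖F (fun j => (((PadicInt.toZModPow s (x j)).val : ℕ) : ℤ_[p])) - F x‖
        ≤ (p : ℝ) ^ (-(s : ℤ)) := by
      refine le_trans (hF _ _) ?_
      rw [pi_norm_le_iff_of_nonneg hr]
      intro j
      rw [Pi.sub_apply, norm_sub_le_pow_iff_toZModPow_eq, toZModPow_natCast_val]
    have h := (pi_norm_le_iff_of_nonneg hr).1 hxy i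
    rw [Pi.sub_apply, norm_sub_le_pow_iff_toZModPow_eq] at h
    simpa [modMapV] using h
  set v : Fin m → ZMod (p ^ s) := fun i => PadicInt.toZModPow s (b i) with hv
  have hcard := hbal s hs v
  rw [Nat.card_eq_fintype_card] at hcard
  obtain e := Fintype.equivFinOfCardEq hcard
  refine ⟨fun j i => (((e.symm j).val i).val : ℤ_[p]), ?_, ?_⟩
  · intro i j hij
    rw [Set.disjoint_left]
    intro x hxi hxj
    apply hij
    have h1 := (mem_closedBall_iff_toZModPow s _ x).1 hxi
    have h2 := (mem_closedBall_iff_toZModPow s _ x).1 hxj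
    apply e.symm.injective
    apply Subtype.ext
    funext k
    have e1 := h1 k; have e2 := h2 k
    rw [toZModPow_natCast_val] at e1 e2
    rw [← e1, e2]
  · ext x
    simp only [Set.mem_preimage, Set.mem_iUnion]
    constructor
    · intro hx
      have hvx : modMapV p F s (fun j => PadicInt.toZModPow s (x j)) = v := by
        funext i
        rw [hmod, hv]
        exact (mem_closedBall_iff_toZModPow s b (F x)).1 hx i
      refine ⟨e ⟨_, hvx⟩, ?_⟩
      rw [mem_closedBall_iff_toZModPow]
      intro i
      rw [toZModPow_natCast_val, Equiv.symm_apply_apply]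
    · rintro ⟨j, hj⟩
      rw [mem_closedBall_iff_toZModPow]
      intro i
      rw [← hmod x i]
      have hx := (mem_closedBall_iff_toZModPow s _ x).1 hj
      have hred : (fun k => PadicInt.toZModPow s (x k)) = (e.symm j).val := by
        funext k
        have := hx k
        rwa [toZModPow_natCast_val] at this
      rw [hred, (e.symm j).property]
end

section
/- Let p be a prime, 1 ≤ m ≤ n, and let F : ℤ_p^n → ℤ_p^m be a compatible function that is measure-preserving, i.e., μ_p^{⊗n}(F^{−1}(A)) = μ_p^{⊗m}(A) for every measurable A ⊆ ℤ_p^m. Then F is balanced modulo p^k for every k = 1, 2, 3, … -/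
open MeasureTheory Filter

open scoped ENNReal

namespace BalancedAux

variable (p : ℕ) [Fact p.Prime]

instance : (padicHaar p).IsAddLeftInvariant :=
  Measure.isAddLeftInvariant_addHaarMeasure _

lemma haar_univ : padicHaar p Set.univ = 1 := by
  rw [← TopologicalSpace.PositiveCompacts.coe_top (α := ℤ_[p])]
  exact Measure.addHaarMeasure_self

instance : IsFiniteMeasure (padicHaar p) :=
  ⟨by rw [haar_univ]; exact ENNReal.one_lt_top⟩

lemma toZModPow_eq_iff (k : ℕ) (x y : ℤ_[p]) :
    PadicInt.toZModPow k x = PadicInt.toZModPow k y ↔ ‖x - y‖ ≤ (p : ℝ) ^ (-(k : ℤ)) := by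
  rw [PadicInt.norm_le_pow_iff_mem_span_pow, ← PadicInt.ker_toZModPow, RingHom.mem_ker,
    map_sub, sub_eq_zero]

/-- The ball of radius `p^{-k}` around (a lift of) `c`. -/
def ball (k : ℕ) (c : ZMod (p ^ k)) : Set ℤ_[p] := PadicInt.toZModPow k ⁻¹' {c}

lemma neZero (k : ℕ) : NeZero (p ^ k) :=
  ⟨pow_ne_zero _ (Fact.out : p.Prime).ne_zero⟩

lemma ball_eq (k : ℕ) (c : ZMod (p ^ k)) :
    ball p k c = Metric.closedBall ((c.val : ℤ_[p])) ((p : ℝ) ^ (-(k : ℤ))) := by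
  haveI := neZero p k
  ext x
  have hc : PadicInt.toZModPow k ((c.val : ℤ_[p])) = c := by
    rw [map_natCast, ZMod.natCast_zmod_val]
  simp only [ball, Set.mem_preimage, Set.mem_singleton_iff, Metric.mem_closedBall,
    dist_eq_norm]
  conv_lhs => rw [← hc]
  rw [toZModPow_eq_iff]

lemma ball_measurable (k : ℕ) (c : ZMod (p ^ k)) : MeasurableSet (ball p k c) := by
  rw [ball_eq]; exact measurableSet_closedBall

lemma mem_ball (k : ℕ) (c : ZMod (p ^ k)) (x : ℤ_[p]) :
    x ∈ ball p k c ↔ PadicInt.toZModPow k x = c := Iff.rfl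

lemma haar_ball (k : ℕ) (c : ZMod (p ^ k)) :
    padicHaar p (ball p k c) = ((p : ℝ≥0∞) ^ k)⁻¹ := by
  haveI := neZero p k
  have hconst : ∀ c : ZMod (p ^ k),
      padicHaar p (ball p k c) = padicHaar p (Metric.closedBall (0 : ℤ_[p]) ((p:ℝ) ^ (-(k:ℤ)))) := by
    intro c
    rw [ball_eq]
    have : Metric.closedBall ((c.val : ℤ_[p])) ((p:ℝ) ^ (-(k:ℤ)))
        = (fun x => (-(c.val : ℤ_[p])) + x) ⁻¹' Metric.closedBall (0 : ℤ_[p]) ((p:ℝ) ^ (-(k:ℤ))) := by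
      ext x
      simp only [Set.mem_preimage, Metric.mem_closedBall, dist_eq_norm, sub_zero]
      rw [neg_add_eq_sub]
    rw [this, measure_preimage_add]
  have hdisj : Pairwise (Function.onFun Disjoint fun c : ZMod (p ^ k) => ball p k c) := by
    intro c c' hcc'
    rw [Function.onFun, Set.disjoint_left]
    intro x hx hx'
    exact hcc' ((mem_ball p k c x).mp hx ▸ (mem_ball p k c' x).mp hx' ▸ rfl)
  have hunion : (⋃ c : ZMod (p ^ k), ball p k c) = Set.univ := by
    ext x
    simp only [Set.mem_iUnion, Set.mem_univ, iff_true]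
    exact ⟨PadicInt.toZModPow k x, rfl⟩
  have h1 : (1 : ℝ≥0∞) = ∑' c : ZMod (p ^ k), padicHaar p (ball p k c) := by
    rw [← haar_univ p, ← hunion, measure_iUnion hdisj (ball_measurable p k)]
  rw [tsum_fintype] at h1
  have h2 : (1 : ℝ≥0∞) = (p ^ k : ℕ) *
      padicHaar p (Metric.closedBall (0 : ℤ_[p]) ((p:ℝ) ^ (-(k:ℤ)))) := by
    rw [h1]
    simp only [hconst]
    rw [Finset.sum_const, Finset.card_univ, ZMod.card, nsmul_eq_mul]
  have hpk0 : ((p ^ k : ℕ) : ℝ≥0∞) ≠ 0 := by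
    exact_mod_cast (neZero p k).out
  have hpkt : ((p ^ k : ℕ) : ℝ≥0∞) ≠ ⊤ := ENNReal.natCast_ne_top _
  have := congrArg (fun t => ((p ^ k : ℕ) : ℝ≥0∞)⁻¹ * t) h2
  simp only [mul_one] at this
  rw [← mul_assoc, ENNReal.inv_mul_cancel hpk0 hpkt, one_mul] at this
  rw [hconst, ← this]
  push_cast
  rfl

end BalancedAux

namespace BalancedAux
variable (p : ℕ) [Fact p.Prime]

lemma pi_measure (N k : ℕ) (w : Fin N → ZMod (p ^ k)) :
    (Measure.pi fun _ : Fin N => padicHaar p) (Set.univ.pi fun i => ball p k (w i)) =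
      (((p : ℝ≥0∞) ^ k)⁻¹) ^ N := by
  rw [Measure.pi_pi]
  simp only [haar_ball]
  rw [Finset.prod_const, Finset.card_univ, Fintype.card_fin]

end BalancedAux

/-- A compatible measure-preserving function `F : ℤ_p^n → ℤ_p^m` (with `1 ≤ m ≤ n`) is
balanced modulo `p^k` for every `k ≥ 1`. -/
theorem balanced_of_compatible_measurePreserving (p n m : ℕ) [Fact p.Prime]
    (hm : 1 ≤ m) (hmn : m ≤ n)
    (F : (Fin n → ℤ_[p]) → (Fin m → ℤ_[p]))
    (hF : ∀ x y : Fin n → ℤ_[p], ‖F x - F y‖ ≤ ‖x - y‖)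
    (hmp : ∀ A : Set (Fin m → ℤ_[p]), MeasurableSet A →
      (Measure.pi fun _ : Fin n => padicHaar p) (F ⁻¹' A) =
        (Measure.pi fun _ : Fin m => padicHaar p) A) :
    ∀ k : ℕ, 1 ≤ k → ∀ v : Fin m → ZMod (p ^ k),
      Nat.card {w : Fin n → ZMod (p ^ k) // modMapV p F k w = v} = p ^ (k * (n - m)) := by
  intro k hk v
  haveI := BalancedAux.neZero p k
  classical
  set q : ℝ≥0∞ := (p : ℝ≥0∞) ^ k with hq
  have hp0 : (p : ℝ≥0∞) ≠ 0 := by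
    exact_mod_cast (Fact.out : p.Prime).ne_zero
  have hq0 : q ≠ 0 := pow_ne_zero _ hp0
  have hqt : q ≠ ⊤ := by
    rw [hq]; exact ENNReal.pow_ne_top (ENNReal.natCast_ne_top p)
  -- the key congruence: `F x mod p^k` only depends on `x mod p^k`
  have key : ∀ (x : Fin n → ℤ_[p]) (i : Fin m),
      modMapV p F k (fun j => PadicInt.toZModPow k (x j)) i = PadicInt.toZModPow k (F x i) := by
    intro x i
    show PadicInt.toZModPow k
      (F (fun j => (((PadicInt.toZModPow k (x j)).val : ℕ) : ℤ_[p])) i) = _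
    set x' : Fin n → ℤ_[p] := fun j => (((PadicInt.toZModPow k (x j)).val : ℕ) : ℤ_[p]) with hx'
    rw [BalancedAux.toZModPow_eq_iff]
    have h1 : ‖F x' i - F x i‖ = ‖(F x' - F x) i‖ := by rw [Pi.sub_apply]
    have h2 : ‖(F x' - F x) i‖ ≤ ‖F x' - F x‖ := norm_le_pi_norm _ i
    have h3 : ‖x' - x‖ ≤ (p : ℝ) ^ (-(k : ℤ)) := by
      apply pi_norm_le_iff_of_nonneg (by positivity) |>.mpr
      intro j
      rw [Pi.sub_apply, ← BalancedAux.toZModPow_eq_iff]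
      rw [hx']
      rw [map_natCast, ZMod.natCast_zmod_val]
    calc ‖F x' i - F x i‖ = ‖(F x' - F x) i‖ := h1
      _ ≤ ‖F x' - F x‖ := h2
      _ ≤ ‖x' - x‖ := hF _ _
      _ ≤ _ := h3
  -- the fiber as a finset
  let T : Finset (Fin n → ZMod (p ^ k)) := Finset.univ.filter (fun w => modMapV p F k w = v)
  have hcardT : Nat.card {w : Fin n → ZMod (p ^ k) // modMapV p F k w = v} = T.card := by
    rw [Nat.card_eq_fintype_card, Fintype.card_subtype]
  set Sv : Set (Fin m → ℤ_[p]) := Set.univ.pi fun i => BalancedAux.ball p k (v i) with hSv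
  have hSvmeas : MeasurableSet Sv :=
    MeasurableSet.univ_pi fun i => BalancedAux.ball_measurable p k (v i)
  have hpre : F ⁻¹' Sv = ⋃ w ∈ T, (Set.univ.pi fun j => BalancedAux.ball p k (w j)) := by
    ext x
    simp only [Set.mem_preimage, hSv, Set.mem_univ_pi, BalancedAux.mem_ball, Set.mem_iUnion,
      Finset.mem_filter, Finset.mem_univ, true_and, T]
    constructor
    · intro h
      refine ⟨fun j => PadicInt.toZModPow k (x j), ⟨?_, fun j => rfl⟩⟩
      funext i
      rw [key x i]
      exact h i
    · rintro ⟨w, hw, hxw⟩ i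
      have hwx : w = fun j => PadicInt.toZModPow k (x j) := by
        funext j; exact (hxw j).symm
      rw [← hw, hwx]
      exact (key x i).symm
  have hdisj : (T : Set (Fin n → ZMod (p ^ k))).PairwiseDisjoint
      (fun w => Set.univ.pi fun j => BalancedAux.ball p k (w j)) := by
    intro w _ w' _ hww'
    rw [Function.onFun, Set.disjoint_left]
    intro x hx hx'
    apply hww'
    funext j
    have h1 := (Set.mem_univ_pi.mp hx) j
    have h2 := (Set.mem_univ_pi.mp hx') j
    rw [BalancedAux.mem_ball] at h1 h2
    rw [← h1, ← h2]
  have hcount : (Measure.pi fun _ : Fin n => padicHaar p) (F ⁻¹' Sv)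
      = T.card * (q⁻¹) ^ n := by
    rw [hpre, measure_biUnion_finset hdisj
      (fun w _ => MeasurableSet.univ_pi fun j => BalancedAux.ball_measurable p k (w j))]
    simp only [BalancedAux.pi_measure]
    rw [Finset.sum_const, nsmul_eq_mul, hq]
  have hmeq : (T.card : ℝ≥0∞) * (q⁻¹) ^ n = (q⁻¹) ^ m := by
    rw [← hcount, hmp Sv hSvmeas, hSv, BalancedAux.pi_measure, hq]
  -- algebra in ℝ≥0∞
  have hsplit : n = m + (n - m) := (Nat.add_sub_cancel' hmn).symm
  have hinvmul : q⁻¹ * q = 1 := ENNReal.inv_mul_cancel hq0 hqt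
  have hTq : (T.card : ℝ≥0∞) = q ^ (n - m) := by
    have := congrArg (fun t => t * q ^ n) hmeq
    rw [mul_assoc, ← mul_pow, hinvmul, one_pow, mul_one] at this
    rw [this]
    conv_lhs => rw [hsplit]
    rw [pow_add, ← mul_assoc, ← mul_pow, hinvmul, one_pow, one_mul]
  have hfinal : ((T.card : ℕ) : ℝ≥0∞) = ((p ^ (k * (n - m)) : ℕ) : ℝ≥0∞) := by
    rw [hTq, hq, ← pow_mul]
    push_cast
    ring
  rw [hcardT]
  exact_mod_cast hfinal
end

section
/- Let p be a prime, n ≥ 1, and let F : ℤ_p^n → ℤ_p^n be a compatible function. Then F is ergodic with respect to the normalized Haar measure μ_p^{⊗n} on ℤ_p^n if and only if F is transitive modulo p^k for every k = 1, 2, 3, … -/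
open MeasureTheory Filter

open scoped ENNReal

set_option linter.unusedSectionVars false

namespace PadicErg
variable (p : ℕ) [Fact p.Prime]

/-- the ball: fiber of toZModPow. -/
def B (k : ℕ) (c : ZMod (p ^ k)) : Set ℤ_[p] := (PadicInt.toZModPow k) ⁻¹' {c}

lemma toZModPow_eq_iff_norm (k : ℕ) (x y : ℤ_[p]) :
    PadicInt.toZModPow k x = PadicInt.toZModPow k y ↔ ‖x - y‖ ≤ (p : ℝ) ^ (-(k : ℤ)) := by
  rw [PadicInt.norm_le_pow_iff_mem_span_pow, ← sub_eq_zero, ← map_sub, ← RingHom.mem_ker,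
    PadicInt.ker_toZModPow]

lemma neZeropk (k : ℕ) : NeZero (p ^ k) :=
  ⟨pow_ne_zero k (Fact.out : p.Prime).ne_zero⟩

lemma toZModPow_natCast_val (k : ℕ) (c : ZMod (p ^ k)) :
    PadicInt.toZModPow k ((c.val : ℤ_[p])) = c := by
  haveI := neZeropk p k
  rw [map_natCast, ZMod.natCast_zmod_val]

lemma B_eq_closedBall (k : ℕ) (c : ZMod (p ^ k)) :
    B p k c = Metric.closedBall ((c.val : ℤ_[p])) ((p : ℝ) ^ (-(k : ℤ))) := by
  ext x
  simp only [B, Set.mem_preimage, Set.mem_singleton_iff, Metric.mem_closedBall, dist_eq_norm]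
  rw [← toZModPow_natCast_val p k c, toZModPow_eq_iff_norm, toZModPow_natCast_val]

lemma B_eq_ball (k : ℕ) (c : ZMod (p ^ k)) :
    B p k c = Metric.ball ((c.val : ℤ_[p])) ((p : ℝ) ^ (-(k : ℤ) + 1)) := by
  rw [B_eq_closedBall]
  ext x
  simp only [Metric.mem_closedBall, Metric.mem_ball, dist_eq_norm]
  exact PadicInt.norm_le_pow_iff_norm_lt_pow_add_one _ _

lemma B_measurable (k : ℕ) (c : ZMod (p ^ k)) : MeasurableSet (B p k c) := by
  rw [B_eq_closedBall]; exact measurableSet_closedBall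

lemma B_open (k : ℕ) (c : ZMod (p ^ k)) : IsOpen (B p k c) := by
  rw [B_eq_ball]; exact Metric.isOpen_ball

lemma haar_univ : padicHaar p Set.univ = 1 := by
  have := Measure.addHaarMeasure_self (K₀ := (⊤ : TopologicalSpace.PositiveCompacts ℤ_[p]))
  simpa [padicHaar] using this

instance : IsProbabilityMeasure (padicHaar p) := ⟨haar_univ p⟩

instance : (padicHaar p).IsAddLeftInvariant := by
  unfold padicHaar; infer_instance

lemma haar_B (k : ℕ) (c : ZMod (p ^ k)) :
    padicHaar p (B p k c) = ((p : ℝ≥0∞) ^ k)⁻¹ := by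
  haveI := neZeropk p k
  have key : ∀ c : ZMod (p ^ k), padicHaar p (B p k c) = padicHaar p (B p k 0) := by
    intro c
    have him : (fun x => (c.val : ℤ_[p]) + x) ⁻¹' (B p k c) = B p k 0 := by
      ext x
      simp only [B, Set.mem_preimage, Set.mem_singleton_iff, map_add, toZModPow_natCast_val]
      constructor
      · intro h; have := congrArg (fun t => t - c) h; simpa using this
      · intro h; simp [h]
    rw [← him, measure_preimage_add]
  have hdisj : Pairwise (Function.onFun Disjoint fun c : ZMod (p ^ k) => B p k c) := by
    intro a b hab
    simp only [Function.onFun, Set.disjoint_left]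
    rintro x ha hb
    exact hab (ha.symm.trans hb)
  have hcover : ⋃ c : ZMod (p ^ k), B p k c = Set.univ := by
    ext x; simp [B]
  have hsum : ∑ c : ZMod (p ^ k), padicHaar p (B p k c) = 1 := by
    rw [← tsum_fintype (L := SummationFilter.unconditional _), ← measure_iUnion hdisj (fun c => B_measurable p k c), hcover, haar_univ]
  rw [Finset.sum_congr rfl (fun c _ => key c)] at hsum
  simp only [Finset.sum_const, Finset.card_univ, ZMod.card, nsmul_eq_mul] at hsum
  have hpk : ((p ^ k : ℕ) : ℝ≥0∞) ≠ 0 := by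
    exact_mod_cast Nat.cast_ne_zero.mpr (neZeropk p k).out
  have hpk' : ((p ^ k : ℕ) : ℝ≥0∞) ≠ ⊤ := ENNReal.natCast_ne_top _
  rw [key c]
  have := ENNReal.eq_inv_of_mul_eq_one_left (by rwa [mul_comm] at hsum)
  rw [this]
  simp [ENNReal.inv_pow]
end PadicErg
namespace PadicErg
variable (p : ℕ) [Fact p.Prime]

lemma isBasis_B : TopologicalSpace.IsTopologicalBasis
    {S : Set ℤ_[p] | ∃ k c, S = B p k c} := by
  apply TopologicalSpace.isTopologicalBasis_of_isOpen_of_nhds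
  · rintro S ⟨k, c, rfl⟩; exact B_open p k c
  · intro x U hxU hU
    obtain ⟨ε, hε, hball⟩ := Metric.isOpen_iff.mp hU x hxU
    obtain ⟨k, hk⟩ := PadicInt.exists_pow_neg_lt p hε
    refine ⟨B p k (PadicInt.toZModPow k x), ⟨k, _, rfl⟩, by simp [B], ?_⟩
    intro y hy
    apply hball
    rw [Metric.mem_ball, dist_eq_norm]
    calc ‖y - x‖ ≤ (p : ℝ) ^ (-(k : ℤ)) := (toZModPow_eq_iff_norm p k y x).mp hy
    _ < ε := hk

lemma borel_eq_generateFrom_B :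
    (padicMS p) = MeasurableSpace.generateFrom {S : Set ℤ_[p] | ∃ k c, S = B p k c} :=
  (isBasis_B p).borel_eq_generateFrom

variable (n : ℕ)

/-- reduction map -/
noncomputable def red (k : ℕ) : (Fin n → ℤ_[p]) → (Fin n → ZMod (p ^ k)) :=
  fun x i => PadicInt.toZModPow k (x i)

/-- cylinder -/
def Cyl (k : ℕ) (v : Fin n → ZMod (p ^ k)) : Set (Fin n → ℤ_[p]) := red p n k ⁻¹' {v}

lemma Cyl_eq_pi (k : ℕ) (v : Fin n → ZMod (p ^ k)) :
    Cyl p n k v = Set.pi Set.univ (fun i => B p k (v i)) := by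
  ext x
  simp only [Cyl, red, Set.mem_preimage, Set.mem_singleton_iff, Set.mem_pi, Set.mem_univ,
    forall_true_left, B, funext_iff]

lemma Cyl_measurable (k : ℕ) (v : Fin n → ZMod (p ^ k)) : MeasurableSet (Cyl p n k v) := by
  rw [Cyl_eq_pi]
  exact MeasurableSet.pi (Set.countable_univ) (fun i _ => B_measurable p k (v i))

/-- the collection of all cylinders -/
def CylSet : Set (Set (Fin n → ℤ_[p])) := {C | ∃ k v, C = Cyl p n k v}

lemma generateFrom_CylSet :
    MeasurableSpace.generateFrom (CylSet p n) = MeasurableSpace.pi := by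
  apply le_antisymm
  · rw [MeasurableSpace.generateFrom_le_iff]
    rintro C ⟨k, v, rfl⟩
    exact Cyl_measurable p n k v
  · rw [MeasurableSpace.pi_eq_generateFrom_projections]
    rw [MeasurableSpace.generateFrom_le_iff]
    rintro S ⟨i, T, hT, rfl⟩
    have hc : MeasurableSpace.comap (fun x : Fin n → ℤ_[p] => x i) (padicMS p) ≤
        MeasurableSpace.generateFrom (CylSet p n) := by
      rw [borel_eq_generateFrom_B, MeasurableSpace.comap_generateFrom,
        MeasurableSpace.generateFrom_le_iff]
      rintro S' ⟨S'', ⟨k, c, rfl⟩, rfl⟩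
      have hU : (fun x : Fin n → ℤ_[p] => x i) ⁻¹' B p k c
          = ⋃ v ∈ {v : Fin n → ZMod (p ^ k) | v i = c}, Cyl p n k v := by
        ext x
        simp only [Set.mem_preimage, Set.mem_iUnion, Cyl, Set.mem_singleton_iff,
          Set.mem_setOf_eq, B, exists_prop]
        constructor
        · intro h; exact ⟨red p n k x, h, rfl⟩
        · rintro ⟨v, hvi, hxv⟩
          have := congrFun hxv i
          simp only [red] at this
          rw [this, hvi]
      rw [hU]
      exact MeasurableSet.biUnion (Set.to_countable _)
        (fun v _ => MeasurableSpace.measurableSet_generateFrom (show Cyl p n k v ∈ CylSet p n from ⟨k, v, rfl⟩))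
    exact hc _ ⟨T, hT, rfl⟩

end PadicErg

namespace PadicErg
variable (p : ℕ) [Fact p.Prime] (n : ℕ)

lemma Cyl_subset_of_le {k l : ℕ} (hkl : k ≤ l) {v : Fin n → ZMod (p ^ k)}
    {w : Fin n → ZMod (p ^ l)} {x₀ : Fin n → ℤ_[p]}
    (h1 : x₀ ∈ Cyl p n k v) (h2 : x₀ ∈ Cyl p n l w) :
    Cyl p n l w ⊆ Cyl p n k v := by
  intro y hy
  simp only [Cyl, red, Set.mem_preimage, Set.mem_singleton_iff, funext_iff] at *
  intro i
  rw [← PadicInt.cast_toZModPow k l hkl (y i), hy i, ← h2 i,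
    PadicInt.cast_toZModPow k l hkl, h1 i]

lemma isPiSystem_CylSet : IsPiSystem (CylSet p n) := by
  have key : ∀ (k l : ℕ), k ≤ l → ∀ (v : Fin n → ZMod (p ^ k)) (w : Fin n → ZMod (p ^ l)),
      (Cyl p n k v ∩ Cyl p n l w).Nonempty → Cyl p n k v ∩ Cyl p n l w ∈ CylSet p n := by
    intro k l hkl v w ⟨x₀, h1, h2⟩
    have : Cyl p n k v ∩ Cyl p n l w = Cyl p n l w :=
      Set.inter_eq_self_of_subset_right (Cyl_subset_of_le p n hkl h1 h2)
    rw [this]; exact ⟨l, w, rfl⟩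
  rintro C1 ⟨k, v, rfl⟩ C2 ⟨l, w, rfl⟩ hne
  rcases le_total k l with h | h
  · exact key k l h v w hne
  · rw [Set.inter_comm] at hne ⊢
    exact key l k h w v hne

/-- the product measure -/
noncomputable def μn : Measure (Fin n → ℤ_[p]) := Measure.pi fun _ : Fin n => padicHaar p

instance : IsProbabilityMeasure (μn p n) := by
  unfold μn; infer_instance

lemma μn_Cyl (k : ℕ) (v : Fin n → ZMod (p ^ k)) :
    μn p n (Cyl p n k v) = (((p : ℝ≥0∞) ^ k)⁻¹) ^ n := by
  rw [Cyl_eq_pi, μn, Measure.pi_pi]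
  simp [haar_B]

lemma q_ne_zero (k : ℕ) : (((p : ℝ≥0∞) ^ k)⁻¹) ^ n ≠ 0 := by
  have hp : (p : ℝ≥0∞) ≠ ⊤ := ENNReal.natCast_ne_top _
  simp only [ne_eq, pow_eq_zero_iff', ENNReal.inv_eq_zero, not_and_or]
  left
  exact ENNReal.pow_ne_top hp

lemma card_mul_q (k : ℕ) :
    (Fintype.card (Fin n → ZMod (p ^ k)) : ℝ≥0∞) * (((p : ℝ≥0∞) ^ k)⁻¹) ^ n = 1 := by
  haveI := neZeropk p k
  have hp0 : (p : ℝ≥0∞) ≠ 0 := by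
    exact_mod_cast Nat.cast_ne_zero.mpr (Fact.out : p.Prime).ne_zero
  have hpt : (p : ℝ≥0∞) ≠ ⊤ := ENNReal.natCast_ne_top _
  rw [Fintype.card_fun, ZMod.card, Fintype.card_fin]
  push_cast
  rw [← mul_pow, ENNReal.mul_inv_cancel (by positivity) (ENNReal.pow_ne_top hpt), one_pow]

lemma μn_red_preimage (k : ℕ) (T : Finset (Fin n → ZMod (p ^ k))) :
    μn p n (red p n k ⁻¹' ↑T) = T.card * (((p : ℝ≥0∞) ^ k)⁻¹) ^ n := by
  have : red p n k ⁻¹' ↑T = ⋃ v ∈ T, Cyl p n k v := by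
    ext x
    simp [Cyl, red, eq_comm]
  rw [this, measure_biUnion_finset ?_ (fun v _ => Cyl_measurable p n k v)]
  · rw [Finset.sum_congr rfl (fun v _ => μn_Cyl p n k v)]
    simp [mul_comm]
  · intro a _ b _ hab
    simp only [Function.onFun, Set.disjoint_left, Cyl]
    rintro x ha hb
    simp only [Set.mem_preimage, Set.mem_singleton_iff] at ha hb
    exact hab (ha.symm.trans hb)

end PadicErg


namespace PadicErg
variable (p : ℕ) [Fact p.Prime] (n : ℕ)
variable (F : (Fin n → ℤ_[p]) → (Fin n → ℤ_[p]))
variable (hF : ∀ x y : Fin n → ℤ_[p], ‖F x - F y‖ ≤ ‖x - y‖)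

include hF in
lemma F_congr (k : ℕ) {x y : Fin n → ℤ_[p]} (h : red p n k x = red p n k y) :
    red p n k (F x) = red p n k (F y) := by
  have hpk : (0:ℝ) ≤ (p : ℝ) ^ (-(k : ℤ)) := by positivity
  have h1 : ‖x - y‖ ≤ (p : ℝ) ^ (-(k : ℤ)) := by
    rw [pi_norm_le_iff_of_nonneg hpk]
    intro i
    have := congrFun h i
    simp only [red] at this
    simpa using (toZModPow_eq_iff_norm p k (x i) (y i)).mp this
  have h2 : ‖F x - F y‖ ≤ (p : ℝ) ^ (-(k : ℤ)) := le_trans (hF x y) h1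
  funext i
  simp only [red]
  rw [toZModPow_eq_iff_norm]
  calc ‖F x i - F y i‖ = ‖(F x - F y) i‖ := by simp
  _ ≤ ‖F x - F y‖ := norm_le_pi_norm _ i
  _ ≤ _ := h2

include hF in
lemma red_F (k : ℕ) (x : Fin n → ℤ_[p]) :
    red p n k (F x) = modMapV p F k (red p n k x) := by
  haveI := neZeropk p k
  have : red p n k (fun j => (((red p n k x j).val : ℕ) : ℤ_[p])) = red p n k x := by
    funext j
    simp only [red]
    rw [toZModPow_natCast_val]
  rw [← F_congr p n F hF k this]
  rfl

include hF in
lemma red_F_iter (k j : ℕ) (x : Fin n → ℤ_[p]) :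
    red p n k (F^[j] x) = (modMapV p F k)^[j] (red p n k x) := by
  induction j with
  | zero => rfl
  | succ j ih =>
    rw [Function.iterate_succ_apply', Function.iterate_succ_apply',
      red_F p n F hF k, ih]

include hF in
lemma F_preimage_red (k : ℕ) (T : Set (Fin n → ZMod (p ^ k))) :
    F ⁻¹' (red p n k ⁻¹' T) = red p n k ⁻¹' (modMapV p F k ⁻¹' T) := by
  ext x
  simp only [Set.mem_preimage, red_F p n F hF k]

include hF in
lemma F_measurable : Measurable F := by
  have : LipschitzWith 1 F := by
    apply LipschitzWith.of_dist_le_mul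
    intro x y
    rw [dist_eq_norm, dist_eq_norm]
    simpa using hF x y
  exact this.continuous.measurable

end PadicErg

namespace PadicErg

lemma bij_of_trans {α : Type*} [Finite α] (g : α → α)
    (h : ∀ x z : α, ∃ j, g^[j] x = z) : Function.Bijective g := by
  rw [← Finite.surjective_iff_bijective]
  intro z
  obtain ⟨j, hj⟩ := h (g z) z
  rw [← Function.iterate_succ_apply, Function.iterate_succ_apply'] at hj
  exact ⟨g^[j] z, hj⟩

lemma exists_period {α : Type*} [Finite α] (g : α → α) (hg : Function.Injective g) (x : α) :
    ∃ m, 1 ≤ m ∧ g^[m] x = x := by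
  obtain ⟨a, b, hab, he⟩ := Finite.exists_ne_map_eq_of_infinite (fun j : ℕ => g^[j] x)
  rcases hab.lt_or_gt with h | h
  · refine ⟨b - a, by omega, ?_⟩
    have : g^[a] (g^[b - a] x) = g^[a] x := by
      rw [← Function.iterate_add_apply]
      rw [show a + (b - a) = b by omega]
      exact he.symm
    exact hg.iterate a this
  · refine ⟨a - b, by omega, ?_⟩
    have : g^[b] (g^[a - b] x) = g^[b] x := by
      rw [← Function.iterate_add_apply]
      rw [show b + (a - b) = a by omega]
      exact he
    exact hg.iterate b this

variable (p : ℕ) [Fact p.Prime] (n : ℕ)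
variable (F : (Fin n → ℤ_[p]) → (Fin n → ℤ_[p]))
variable (hF : ∀ x y : Fin n → ℤ_[p], ‖F x - F y‖ ≤ ‖x - y‖)

include hF in
/-- forward direction -/
lemma forward
    (hpres : ∀ A : Set (Fin n → ℤ_[p]), MeasurableSet A → μn p n (F ⁻¹' A) = μn p n A)
    (herg : ∀ A : Set (Fin n → ℤ_[p]), MeasurableSet A → F ⁻¹' A = A →
      μn p n A = 0 ∨ μn p n A = 1)
    (k : ℕ) (x z : Fin n → ZMod (p ^ k)) :
    ∃ j : ℕ, (modMapV p F k)^[j] x = z := by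
  classical
  haveI := neZeropk p k
  set g := modMapV p F k with hg
  set q : ℝ≥0∞ := (((p : ℝ≥0∞) ^ k)⁻¹) ^ n with hq
  have hq0 : q ≠ 0 := q_ne_zero p n k
  have hqt : q ≠ ⊤ := by
    rw [hq]
    exact ENNReal.pow_ne_top (by simp [ENNReal.inv_ne_top, pow_eq_zero_iff',
      (Fact.out : p.Prime).ne_zero])
  -- g is surjective, hence bijective
  have hsurj : Function.Surjective g := by
    intro v
    by_contra hcon
    push_neg at hcon
    have hfib : g ⁻¹' {v} = ∅ := by
      ext w; simp only [Set.mem_preimage, Set.mem_singleton_iff, Set.mem_empty_iff_false,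
        iff_false]
      exact hcon w
    have h1 : μn p n (F ⁻¹' Cyl p n k v) = q := by
      rw [hpres _ (Cyl_measurable p n k v), μn_Cyl]
    rw [Cyl, F_preimage_red p n F hF, hfib] at h1
    simp at h1
    exact hq0 h1.symm
  have hbij : Function.Bijective g := (Finite.surjective_iff_bijective).mp hsurj
  have hinj := hbij.injective
  -- the orbit of x
  set O : Set (Fin n → ZMod (p ^ k)) := {w | ∃ j, g^[j] x = w} with hO
  have hOfin : O.Finite := Set.toFinite _
  set T : Finset (Fin n → ZMod (p ^ k)) := hOfin.toFinset with hT
  have hTmem : ∀ w, w ∈ T ↔ ∃ j, g^[j] x = w := by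
    intro w; rw [hT, Set.Finite.mem_toFinset]; rfl
  -- invariance
  have hginv : g ⁻¹' O = O := by
    obtain ⟨m, hm1, hmx⟩ := exists_period g hinj x
    obtain ⟨m', rfl⟩ : ∃ m', m = m' + 1 := ⟨m - 1, by omega⟩
    ext w
    simp only [Set.mem_preimage, hO, Set.mem_setOf_eq]
    constructor
    · rintro ⟨j, hj⟩
      rcases j with _ | j'
      · simp only [Function.iterate_zero_apply] at hj
        refine ⟨m', hinj ?_⟩
        rw [← Function.iterate_succ_apply' g m' x, hmx, hj]
      · rw [Function.iterate_succ_apply'] at hj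
        exact ⟨j', hinj hj⟩
    · rintro ⟨j, hj⟩
      exact ⟨j + 1, by rw [Function.iterate_succ_apply', hj]⟩
  set A : Set (Fin n → ℤ_[p]) := red p n k ⁻¹' O with hA
  have hAmeas : MeasurableSet A := by
    have hAT : A = red p n k ⁻¹' ↑T := by rw [hA, hT, hOfin.coe_toFinset]
    rw [hAT]
    have : red p n k ⁻¹' ↑T = ⋃ v ∈ T, Cyl p n k v := by
      ext y; simp [Cyl, red, eq_comm]
    rw [this]
    exact MeasurableSet.biUnion T.countable_toSet (fun v _ => Cyl_measurable p n k v)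
  have hAinv : F ⁻¹' A = A := by
    rw [hA, F_preimage_red p n F hF, hginv]
  have hAcast : A = red p n k ⁻¹' ↑T := by rw [hA, hT, hOfin.coe_toFinset]
  have hAq : μn p n A = T.card * q := by rw [hAcast]; exact μn_red_preimage p n k T
  have hA0 : μn p n A ≠ 0 := by
    rw [hAq]
    have hTne : (0:ℕ) < T.card := by
      rw [Finset.card_pos]
      exact ⟨x, (hTmem x).mpr ⟨0, rfl⟩⟩
    simp only [ne_eq, mul_eq_zero, not_or]
    exact ⟨by exact_mod_cast hTne.ne', hq0⟩
  have hA1 : μn p n A = 1 := (herg A hAmeas hAinv).resolve_left hA0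
  -- card T = card univ
  have hcard : (T.card : ℝ≥0∞) * q = (Fintype.card (Fin n → ZMod (p ^ k)) : ℝ≥0∞) * q := by
    rw [← hAq, hA1, card_mul_q]
  have hcardn : T.card = Fintype.card (Fin n → ZMod (p ^ k)) := by
    exact_mod_cast (ENNReal.mul_left_inj hq0 hqt).mp hcard
  have hTuniv : T = Finset.univ := Finset.eq_univ_of_card T hcardn
  have : z ∈ T := hTuniv ▸ Finset.mem_univ z
  exact (hTmem z).mp this

end PadicErg

namespace PadicErg
variable (p : ℕ) [Fact p.Prime] (n : ℕ)
variable (F : (Fin n → ℤ_[p]) → (Fin n → ℤ_[p]))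
variable (hF : ∀ x y : Fin n → ℤ_[p], ‖F x - F y‖ ≤ ‖x - y‖)
variable (hT : ∀ k : ℕ, ∀ x z : Fin n → ZMod (p ^ k), ∃ j : ℕ, (modMapV p F k)^[j] x = z)

include hF hT in
lemma backward_pres :
    ∀ A : Set (Fin n → ℤ_[p]), MeasurableSet A → μn p n (F ⁻¹' A) = μn p n A := by
  have hFm := F_measurable p n F hF
  have hbij : ∀ k, Function.Bijective (modMapV p F k) := by
    intro k
    haveI := neZeropk p k
    exact bij_of_trans _ (hT k)
  have hmap : Measure.map F (μn p n) = μn p n := by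
    refine ext_of_generate_finite (CylSet p n) (generateFrom_CylSet p n).symm
      (isPiSystem_CylSet p n) ?_ ?_
    · rintro s ⟨k, v, rfl⟩
      rw [Measure.map_apply hFm (Cyl_measurable p n k v)]
      obtain ⟨w, hw⟩ := (hbij k).surjective v
      have hfib : modMapV p F k ⁻¹' {v} = {w} := by
        ext u
        simp only [Set.mem_preimage, Set.mem_singleton_iff]
        constructor
        · intro h; exact (hbij k).injective (h.trans hw.symm)
        · rintro rfl; exact hw
      rw [Cyl, F_preimage_red p n F hF, hfib]
      show μn p n (Cyl p n k w) = μn p n (Cyl p n k v)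
      rw [μn_Cyl, μn_Cyl]
    · rw [Measure.map_apply hFm MeasurableSet.univ]
      simp
  intro A hA
  rw [← Measure.map_apply hFm hA, hmap]

include hF hT in
lemma backward_erg :
    ∀ A : Set (Fin n → ℤ_[p]), MeasurableSet A → F ⁻¹' A = A →
      μn p n A = 0 ∨ μn p n A = 1 := by
  intro A hA hAinv
  have hFm := F_measurable p n F hF
  have hpres := backward_pres p n F hF hT
  have hbij : ∀ k, Function.Bijective (modMapV p F k) := by
    intro k
    haveI := neZeropk p k
    exact bij_of_trans _ (hT k)
  have hiterinv : ∀ j, F^[j] ⁻¹' A = A := by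
    intro j
    induction j with
    | zero => rfl
    | succ j ih =>
      rw [Function.iterate_succ', Set.preimage_comp, hAinv, ih]
  have hiterpres : ∀ (j : ℕ) (S : Set (Fin n → ℤ_[p])), MeasurableSet S →
      μn p n (F^[j] ⁻¹' S) = μn p n S := by
    intro j
    induction j with
    | zero => intro S _; rfl
    | succ j ih =>
      intro S hS
      rw [Function.iterate_succ', Set.preimage_comp, ih _ (hFm hS), hpres S hS]
  have hconst : ∀ (k : ℕ) (v w : Fin n → ZMod (p ^ k)),
      μn p n (A ∩ Cyl p n k v) = μn p n (A ∩ Cyl p n k w) := by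
    intro k v w
    obtain ⟨j, hj⟩ := hT k w v
    have h1 : F^[j] ⁻¹' (Cyl p n k v) = Cyl p n k w := by
      ext y
      simp only [Cyl, Set.mem_preimage, Set.mem_singleton_iff]
      rw [red_F_iter p n F hF k j]
      constructor
      · intro h
        exact ((hbij k).injective.iterate j) (h.trans hj.symm)
      · intro h; rw [h, hj]
    calc μn p n (A ∩ Cyl p n k v)
        = μn p n (F^[j] ⁻¹' (A ∩ Cyl p n k v)) :=
          (hiterpres j _ (hA.inter (Cyl_measurable p n k v))).symm
      _ = μn p n (A ∩ Cyl p n k w) := by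
          rw [Set.preimage_inter, hiterinv j, h1]
  have hAC : ∀ (k : ℕ) (w : Fin n → ZMod (p ^ k)),
      μn p n (A ∩ Cyl p n k w) = μn p n A * (((p : ℝ≥0∞) ^ k)⁻¹) ^ n := by
    intro k w
    haveI := neZeropk p k
    set q : ℝ≥0∞ := (((p : ℝ≥0∞) ^ k)⁻¹) ^ n with hq
    set c : ℝ≥0∞ := μn p n (A ∩ Cyl p n k w) with hc
    have hsum : (Fintype.card (Fin n → ZMod (p ^ k)) : ℝ≥0∞) * c = μn p n A := by
      have hdecomp : A = ⋃ v ∈ (Finset.univ : Finset (Fin n → ZMod (p ^ k))),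
          A ∩ Cyl p n k v := by
        ext y
        simp [Cyl]
      have hdisj : (↑(Finset.univ : Finset (Fin n → ZMod (p ^ k))) :
          Set (Fin n → ZMod (p ^ k))).PairwiseDisjoint (fun v => A ∩ Cyl p n k v) := by
        intro a _ b _ hab
        simp only [Function.onFun, Set.disjoint_left, Cyl]
        rintro y ⟨_, ha⟩ ⟨_, hb⟩
        simp only [Set.mem_preimage, Set.mem_singleton_iff] at ha hb
        exact hab (ha.symm.trans hb)
      conv_rhs => rw [hdecomp]
      rw [measure_biUnion_finset hdisj
        (fun v _ => hA.inter (Cyl_measurable p n k v))]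
      rw [Finset.sum_congr rfl (fun v _ => hconst k v w)]
      simp [mul_comm, hc]
    calc c = c * ((Fintype.card (Fin n → ZMod (p ^ k)) : ℝ≥0∞) * q) := by
          rw [card_mul_q, mul_one]
      _ = ((Fintype.card (Fin n → ZMod (p ^ k)) : ℝ≥0∞) * c) * q := by ring
      _ = μn p n A * q := by rw [hsum]
  -- restriction measure agrees with scaled measure
  haveI hfin : IsFiniteMeasure ((μn p n A) • μn p n) := by
    constructor
    rw [Measure.smul_apply, smul_eq_mul, measure_univ, mul_one]
    exact measure_lt_top _ _
  have hext : (μn p n).restrict A = (μn p n A) • μn p n := by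
    refine ext_of_generate_finite (CylSet p n) (generateFrom_CylSet p n).symm
      (isPiSystem_CylSet p n) ?_ ?_
    · rintro s ⟨k, v, rfl⟩
      rw [Measure.restrict_apply (Cyl_measurable p n k v), Set.inter_comm,
        hAC k v, Measure.smul_apply, smul_eq_mul, μn_Cyl]
    · rw [Measure.restrict_apply_univ, Measure.smul_apply, smul_eq_mul,
        measure_univ, mul_one]
  have hsq : μn p n A = μn p n A * μn p n A := by
    have h1 : (μn p n).restrict A A = μn p n A := by
      rw [Measure.restrict_apply hA, Set.inter_self]
    conv_lhs => rw [← h1, hext]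
    rw [Measure.smul_apply, smul_eq_mul]
  rcases eq_or_ne (μn p n A) 0 with h | h
  · exact Or.inl h
  · right
    have hne : μn p n A ≠ ⊤ := measure_ne_top _ _
    have h2 : μn p n A * μn p n A = μn p n A * 1 := by rw [mul_one]; exact hsq.symm
    exact (ENNReal.mul_right_inj h hne).mp h2

end PadicErg

/-- A compatible function `F : ℤ_p^n → ℤ_p^n` (with `n ≥ 1`) is ergodic with respect to
the normalized Haar measure on `ℤ_p^n` if and only if it is transitive modulo `p^k`
for every `k ≥ 1`. -/
theorem ergodic_iff_transitive_mod_multivariate (p n : ℕ) [Fact p.Prime] (hn : 1 ≤ n)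
    (F : (Fin n → ℤ_[p]) → (Fin n → ℤ_[p]))
    (hF : ∀ x y : Fin n → ℤ_[p], ‖F x - F y‖ ≤ ‖x - y‖) :
    ((∀ A : Set (Fin n → ℤ_[p]), MeasurableSet A →
        (Measure.pi fun _ : Fin n => padicHaar p) (F ⁻¹' A) =
          (Measure.pi fun _ : Fin n => padicHaar p) A) ∧
      (∀ A : Set (Fin n → ℤ_[p]), MeasurableSet A → F ⁻¹' A = A →
        (Measure.pi fun _ : Fin n => padicHaar p) A = 0 ∨
          (Measure.pi fun _ : Fin n => padicHaar p) A = 1)) ↔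
      ∀ k : ℕ, 1 ≤ k → ∀ x z : Fin n → ZMod (p ^ k),
        ∃ j : ℕ, (modMapV p F k)^[j] x = z := by
  constructor
  · rintro ⟨hpres, herg⟩ k _ x z
    exact PadicErg.forward p n F hF hpres herg k x z
  · intro hTk
    have hT' : ∀ k : ℕ, ∀ x z : Fin n → ZMod (p ^ k),
        ∃ j, (modMapV p F k)^[j] x = z := by
      intro k
      rcases Nat.eq_zero_or_pos k with rfl | hk
      · haveI : Subsingleton (ZMod (p ^ 0)) := by rw [pow_zero]; infer_instance
        intro x z
        exact ⟨0, funext fun i => Subsingleton.elim _ _⟩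
      · exact hTk k hk
    exact ⟨PadicErg.backward_pres p n F hF hT', PadicErg.backward_erg p n F hF hT'⟩
end

section
/- Let p be a prime, f : ℤ_p → ℤ_p compatible, y ∈ ℤ_p, and ε > 0. If every sphere S_{p^{−r}}(y) of radius p^{−r} < ε is invariant under f (i.e., f(S_{p^{−r}}(y)) ⊆ S_{p^{−r}}(y) for all integers r with p^{−r} < ε), then y is a fixed point of f: f(y) = y. -/
open MeasureTheory Filter

/-- If every sphere around `y` of radius `p^{-r} < ε` is invariant under a compatible
`f : ℤ_p → ℤ_p`, then `y` is a fixed point of `f`. -/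
theorem fixedPoint_of_small_spheres_invariant (p : ℕ) [Fact p.Prime]
    (f : ℤ_[p] → ℤ_[p]) (hf : ∀ x y : ℤ_[p], ‖f x - f y‖ ≤ ‖x - y‖)
    (y : ℤ_[p]) (ε : ℝ) (hε : 0 < ε)
    (hinv : ∀ r : ℕ, (p : ℝ) ^ (-(r : ℤ)) < ε →
      Set.MapsTo f (padicSphere p y r) (padicSphere p y r)) :
    f y = y := by
  by_contra h
  have hne : f y - y ≠ 0 := sub_ne_zero.mpr h
  have hpos : 0 < ‖f y - y‖ := norm_pos_iff.mpr hne
  have hp1 : (1 : ℝ) < (p : ℝ) := by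
    exact_mod_cast (Fact.out : p.Prime).one_lt
  have hinvlt : ((p : ℝ)⁻¹) < 1 := inv_lt_one_of_one_lt₀ hp1
  have hinvpos : (0 : ℝ) < (p : ℝ)⁻¹ := inv_pos.mpr (lt_trans one_pos hp1)
  obtain ⟨r, hr⟩ := exists_pow_lt_of_lt_one (lt_min hε hpos) hinvlt
  have hrw : ((p : ℝ)⁻¹) ^ r = (p : ℝ) ^ (-(r : ℤ)) := by
    rw [zpow_neg, zpow_natCast, inv_pow]
  rw [hrw] at hr
  set z : ℤ_[p] := y + (p : ℤ_[p]) ^ r with hz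
  have hzy : ‖z - y‖ = (p : ℝ) ^ (-(r : ℤ)) := by
    simp [hz, PadicInt.norm_p_pow]
  have hmem : z ∈ padicSphere p y r := hzy
  have hfz : ‖f z - y‖ = (p : ℝ) ^ (-(r : ℤ)) :=
    hinv r (hr.trans_le (min_le_left _ _)) hmem
  have hlip : ‖f z - f y‖ ≤ (p : ℝ) ^ (-(r : ℤ)) := (hf z y).trans_eq hzy
  have : ‖f y - y‖ ≤ (p : ℝ) ^ (-(r : ℤ)) := by
    have : f y - y = (f y - f z) + (f z - y) := by ring
    rw [this]
    refine (PadicInt.nonarchimedean _ _).trans (max_le ?_ (le_of_eq hfz))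
    rw [norm_sub_rev]; exact hlip
  exact absurd (this.trans_lt (hr.trans_le (min_le_right _ _))) (lt_irrefl _)
end

section
/- Let p be a prime and let f : ℤ_p → ℤ_p be a 𝓑-function. Then for every a ∈ ℤ_p there exists a sequence (c_j)_{j≥0} of p-adic integers with c_0 = f(a) such that for every integer k ≥ 1 and every h ∈ ℤ_p one has the convergent Taylor expansion f(a + p^k h) = ∑_{j=0}^∞ c_j · (p^k h)^j (the series converges since ‖c_j (p^k h)^j‖_p ≤ p^{−jk}). -/
open MeasureTheory Filter

open Polynomial Filter Finset in
private lemma taylorAux_norm_prod_le_pow {p : ℕ} [Fact p.Prime] (T S : Finset ℕ) (g : ℕ → ℤ_[p])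
    (hT : ∀ l ∈ T, ‖g l‖ ≤ (p : ℝ)⁻¹) :
    ‖∏ l ∈ S, g l‖ ≤ ((p : ℝ)⁻¹) ^ (S ∩ T).card := by
  classical
  have hinv0 : (0:ℝ) ≤ (p:ℝ)⁻¹ := by positivity
  induction S using Finset.induction_on with
  | empty => simp
  | @insert x S hx ih =>
    rw [Finset.prod_insert hx, norm_mul]
    by_cases hxT : x ∈ T
    · rw [Finset.insert_inter_of_mem hxT,
        Finset.card_insert_of_notMem (fun hc => hx (Finset.mem_inter.mp hc).1), pow_succ]
      calc ‖g x‖ * ‖∏ l ∈ S, g l‖ ≤ (p:ℝ)⁻¹ * ((p:ℝ)⁻¹) ^ (S ∩ T).card :=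
            mul_le_mul (hT x hxT) ih (norm_nonneg _) hinv0
        _ = ((p:ℝ)⁻¹) ^ (S ∩ T).card * (p:ℝ)⁻¹ := mul_comm _ _
    · rw [Finset.insert_inter_of_notMem hxT]
      calc ‖g x‖ * ‖∏ l ∈ S, g l‖ ≤ 1 * ((p:ℝ)⁻¹) ^ (S ∩ T).card :=
            mul_le_mul (PadicInt.norm_le_one _) ih (norm_nonneg _) zero_le_one
        _ = _ := one_mul _

open Polynomial Filter Finset in
private lemma taylorAux_count_dvd {p : ℕ} [Fact p.Prime] (a : ℤ_[p]) (i : ℕ)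
    [DecidablePred fun l : ℕ => (p : ℤ_[p]) ∣ (a - (l : ℤ_[p]))] :
    i / p ≤ ((Finset.range i).filter fun l : ℕ => (p : ℤ_[p]) ∣ (a - (l : ℤ_[p]))).card := by
  have hp : 0 < p := (Fact.out : p.Prime).pos
  obtain ⟨r0, hr0p, hr0⟩ := PadicInt.exists_mem_range (x := a)
  rw [PadicInt.maximalIdeal_eq_span_p, Ideal.mem_span_singleton] at hr0
  rw [← Finset.card_range (i / p)]
  refine Finset.card_le_card_of_injOn (fun q => r0 + p * q) ?_ ?_
  · intro q hq
    rw [Finset.mem_coe, Finset.mem_range] at hq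
    rw [Finset.mem_coe, Finset.mem_filter, Finset.mem_range]
    constructor
    · have h1 : (q + 1) * p ≤ i := (Nat.le_div_iff_mul_le hp).mp hq
      nlinarith [hr0p, h1]
    · have h2 : ((r0 + p * q : ℕ) : ℤ_[p]) = (r0 : ℤ_[p]) + (p : ℤ_[p]) * q := by push_cast; ring
      rw [h2, show a - ((r0 : ℤ_[p]) + (p : ℤ_[p]) * q) = (a - r0) - (p : ℤ_[p]) * q by ring]
      exact dvd_sub hr0 (dvd_mul_right _ _)
  · intro q1 _ q2 _ hEq
    simp only at hEq
    have : p * q1 = p * q2 := by omega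
    exact Nat.eq_of_mul_eq_mul_left hp this

open Polynomial Filter Finset in
private lemma taylorAux_coeff_bound {p : ℕ} [Fact p.Prime] (a : ℤ_[p]) (i m : ℕ) :
    ‖(∏ j ∈ Finset.range i, (X + C (a - (j : ℤ_[p])))).coeff m‖ ≤ ((p : ℝ)⁻¹) ^ (i / p - m) := by
  classical
  have hp1 : (1:ℝ) ≤ p := by exact_mod_cast (Fact.out : p.Prime).one_lt.le
  have hinv0 : (0:ℝ) ≤ (p:ℝ)⁻¹ := by positivity
  have hinv1 : (p:ℝ)⁻¹ ≤ 1 := inv_le_one_of_one_le₀ hp1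
  rcases le_or_gt m i with hmi | him
  · rw [Finset.prod_X_add_C_coeff _ _ (by simpa using hmi)]
    refine IsUltrametricDist.norm_sum_le_of_forall_le_of_nonneg (by positivity) ?_
    intro S hS
    rw [Finset.mem_powersetCard] at hS
    obtain ⟨hSsub, hScard⟩ := hS
    rw [Finset.card_range] at hScard
    set T := (Finset.range i).filter fun l : ℕ => (p : ℤ_[p]) ∣ (a - (l : ℤ_[p])) with hT
    have h1 : ‖∏ l ∈ S, (a - (l : ℤ_[p]))‖ ≤ ((p:ℝ)⁻¹) ^ (S ∩ T).card := by
      apply taylorAux_norm_prod_le_pow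
      intro l hl
      rw [hT, Finset.mem_filter] at hl
      obtain ⟨-, c, hc⟩ := hl
      rw [hc, norm_mul, PadicInt.norm_p]
      calc (p:ℝ)⁻¹ * ‖c‖ ≤ (p:ℝ)⁻¹ * 1 :=
            mul_le_mul_of_nonneg_left (PadicInt.norm_le_one c) hinv0
        _ = (p:ℝ)⁻¹ := mul_one _
    refine h1.trans (pow_le_pow_of_le_one hinv0 hinv1 ?_)
    have hTcard : i / p ≤ T.card := taylorAux_count_dvd a i
    have h2 : (T \ S).card ≤ m := by
      have hsub : T \ S ⊆ Finset.range i \ S :=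
        Finset.sdiff_subset_sdiff (Finset.filter_subset _ _) (Finset.Subset.refl S)
      have := Finset.card_le_card hsub
      rwa [Finset.card_sdiff_of_subset hSsub, Finset.card_range, hScard, Nat.sub_sub_self hmi] at this
    have h3 : (T ∩ S).card + (T \ S).card = T.card := Finset.card_inter_add_card_sdiff T S
    have h4 : (S ∩ T).card = (T ∩ S).card := by rw [Finset.inter_comm]
    omega
  · have hdeg : (∏ j ∈ Finset.range i, (X + C (a - (j : ℤ_[p])))).natDegree < m := by
      refine lt_of_le_of_lt ((Polynomial.natDegree_prod_le _ _).trans ?_) him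
      have hone : ∀ j ∈ Finset.range i, (X + C (a - (j : ℤ_[p]))).natDegree = 1 :=
        fun j _ => Polynomial.natDegree_X_add_C _
      rw [Finset.sum_congr rfl hone]
      simp
    rw [Polynomial.coeff_eq_zero_of_natDegree_lt hdeg, norm_zero]
    positivity

/-- Taylor theorem for `𝓑`-functions: if `f(x) = ∑ b_i·x(x-1)⋯(x-i+1)` with `b_i ∈ ℤ_p`,
then for every `a ∈ ℤ_p` there are `p`-adic integer coefficients `c_j` with `c_0 = f(a)`
such that `f(a + p^k h) = ∑_j c_j (p^k h)^j` for all `k ≥ 1` and `h ∈ ℤ_p`. -/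
theorem taylor_of_BFunction (p : ℕ) [Fact p.Prime] (b : ℕ → ℤ_[p]) (f : ℤ_[p] → ℤ_[p])
    (hf : ∀ x : ℤ_[p], f x = ∑' i : ℕ, b i * ∏ j ∈ Finset.range i, (x - (j : ℤ_[p])))
    (a : ℤ_[p]) :
    ∃ c : ℕ → ℤ_[p], c 0 = f a ∧
      ∀ k : ℕ, 1 ≤ k → ∀ h : ℤ_[p],
        f (a + (p : ℤ_[p]) ^ k * h) = ∑' j : ℕ, c j * ((p : ℤ_[p]) ^ k * h) ^ j := by
  classical
  have hp : 0 < p := (Fact.out : p.Prime).pos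
  have hp1 : (1:ℝ) ≤ p := by exact_mod_cast (Fact.out : p.Prime).one_lt.le
  have hinv0 : (0:ℝ) ≤ (p:ℝ)⁻¹ := by positivity
  have hinv1 : (p:ℝ)⁻¹ ≤ 1 := inv_le_one_of_one_le₀ hp1
  have hinvlt1 : (p:ℝ)⁻¹ < 1 := by
    rw [inv_lt_one_iff₀]; right; exact_mod_cast (Fact.out : p.Prime).one_lt
  set P : ℕ → Polynomial ℤ_[p] := fun i => ∏ j ∈ Finset.range i, (Polynomial.X + Polynomial.C (a - (j : ℤ_[p]))) with hP
  set d : ℕ → ℕ → ℤ_[p] := fun i m => (P i).coeff m with hd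
  have hbound : ∀ i m : ℕ, ‖b i * d i m‖ ≤ ((p:ℝ)⁻¹) ^ (i / p - m) := by
    intro i m
    rw [norm_mul]
    calc ‖b i‖ * ‖d i m‖ ≤ 1 * (((p:ℝ)⁻¹) ^ (i / p - m)) :=
          mul_le_mul (PadicInt.norm_le_one _) (taylorAux_coeff_bound a i m) (norm_nonneg _)
            zero_le_one
      _ = _ := one_mul _
  have hsumm : ∀ m : ℕ, Summable fun i => b i * d i m := by
    intro m
    apply NonarchimedeanAddGroup.summable_of_tendsto_cofinite_zero
    rw [Nat.cofinite_eq_atTop]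
    apply squeeze_zero_norm (fun i => hbound i m)
    have h1 : Filter.Tendsto (fun i : ℕ => i / p - m) Filter.atTop Filter.atTop := by
      rw [Filter.tendsto_atTop_atTop]
      intro N
      refine ⟨p * (N + m), fun i hi => ?_⟩
      have h2 : N + m ≤ i / p := (Nat.le_div_iff_mul_le hp).mpr (by rwa [Nat.mul_comm] at hi)
      omega
    exact (tendsto_pow_atTop_nhds_zero_of_lt_one hinv0 hinvlt1).comp h1
  refine ⟨fun m => ∑' i, b i * d i m, ?_, ?_⟩
  · rw [hf a]
    apply tsum_congr
    intro i
    congr 1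
    simp only [hd, hP, Polynomial.coeff_zero_eq_eval_zero, Polynomial.eval_prod]
    apply Finset.prod_congr rfl
    intro j _
    simp
  · intro k hk h
    set t : ℤ_[p] := (p : ℤ_[p]) ^ k * h with htdef
    have ht : ‖t‖ ≤ (p:ℝ)⁻¹ := by
      rw [htdef, norm_mul, norm_pow, PadicInt.norm_p]
      calc ((p:ℝ)⁻¹) ^ k * ‖h‖ ≤ ((p:ℝ)⁻¹) ^ k * 1 :=
            mul_le_mul_of_nonneg_left (PadicInt.norm_le_one h) (by positivity)
        _ = ((p:ℝ)⁻¹) ^ k := mul_one _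
        _ ≤ ((p:ℝ)⁻¹) ^ 1 := pow_le_pow_of_le_one hinv0 hinv1 hk
        _ = (p:ℝ)⁻¹ := pow_one _
    have htm : ∀ m : ℕ, ‖t ^ m‖ ≤ ((p:ℝ)⁻¹) ^ m := by
      intro m
      rw [norm_pow]
      exact pow_le_pow_left₀ (norm_nonneg _) ht m
    set F : ℕ → ℕ → ℤ_[p] := fun i m => b i * d i m * t ^ m with hF
    have hFbound : ∀ i m : ℕ, ‖F i m‖ ≤ ((p:ℝ)⁻¹) ^ ((i / p - m) + m) := by
      intro i m
      rw [hF]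
      simp only
      rw [norm_mul (b i * d i m) (t ^ m), pow_add]
      exact mul_le_mul (hbound i m) (htm m) (norm_nonneg _) (by positivity)
    have hFsum : Summable (Function.uncurry F) := by
      apply NonarchimedeanAddGroup.summable_of_tendsto_cofinite_zero
      rw [NormedAddCommGroup.tendsto_nhds_zero]
      intro ε hε
      rw [Filter.eventually_cofinite]
      obtain ⟨N, hN⟩ := exists_pow_lt_of_lt_one hε hinvlt1
      apply Set.Finite.subset (Finset.range (p * N) ×ˢ Finset.range N : Finset (ℕ × ℕ)).finite_toSet
      rintro ⟨i, m⟩ hx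
      simp only [Set.mem_setOf_eq, not_lt] at hx
      by_contra hcon
      rw [Finset.coe_product] at hcon
      simp only [Set.mem_prod, Finset.mem_coe, Finset.mem_range, not_and_or, not_lt] at hcon
      have hbig : N ≤ (i / p - m) + m := by
        rcases hcon with hcon | hcon
        · have : N ≤ i / p := (Nat.le_div_iff_mul_le hp).mpr (by rwa [Nat.mul_comm] at hcon)
          omega
        · omega
      have hlt : ‖F i m‖ < ε :=
        lt_of_le_of_lt ((hFbound i m).trans (pow_le_pow_of_le_one hinv0 hinv1 hbig)) hN
      exact absurd hx (not_le.mpr hlt)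
    have step1 : ∀ i : ℕ, b i * ∏ j ∈ Finset.range i, (a + t - (j : ℤ_[p])) = ∑' m, F i m := by
      intro i
      have hdeg : (P i).natDegree < i + 1 := by
        refine Nat.lt_succ_of_le ((Polynomial.natDegree_prod_le _ _).trans ?_)
        have hone : ∀ j ∈ Finset.range i, (Polynomial.X + Polynomial.C (a - (j : ℤ_[p]))).natDegree = 1 :=
          fun j _ => Polynomial.natDegree_X_add_C _
        rw [Finset.sum_congr rfl hone]
        simp
      have heval : (P i).eval t = ∏ j ∈ Finset.range i, (a + t - (j : ℤ_[p])) := by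
        rw [hP]
        simp only [Polynomial.eval_prod]
        apply Finset.prod_congr rfl
        intro j _
        simp only [Polynomial.eval_add, Polynomial.eval_X, Polynomial.eval_C]
        ring
      have hts : ∑' m, F i m = ∑ m ∈ Finset.range (i + 1), F i m := by
        apply tsum_eq_sum
        intro m hm
        rw [Finset.mem_range, not_lt] at hm
        have hz : d i m = 0 :=
          Polynomial.coeff_eq_zero_of_natDegree_lt (lt_of_lt_of_le hdeg hm)
        simp [hF, hz]
      rw [hts, ← heval, Polynomial.eval_eq_sum_range' hdeg, Finset.mul_sum]
      apply Finset.sum_congr rfl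
      intro m _
      rw [hF, hd]
      ring
    calc f (a + t) = ∑' i, b i * ∏ j ∈ Finset.range i, (a + t - (j : ℤ_[p])) := hf _
      _ = ∑' i, ∑' m, F i m := tsum_congr step1
      _ = ∑' m, ∑' i, F i m := (Summable.tsum_comm hFsum).symm
      _ = ∑' m, (∑' i, b i * d i m) * t ^ m := by
          apply tsum_congr
          intro m
          exact (hsumm m).tsum_mul_right (t ^ m)
end
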